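/- arXiv:0709.0373 — 3 statements merged into one kernel-verified Lean document; each statement's English description precedes it below -/
import Mathlib

section
/- Let A be a subspace arrangement in ℂ^l, x₀ ∈ A, A' = A \ {x₀}, and E = {(y,z) ∈ A' × A' : x₀ ∩ y = x₀ ∩ z and y ≠ z}. For (u,v) ∈ E let I_{u,v} ⊆ D(A)/D(A') be the span of all elements {x₀, u, y_{j_1}, …, y_{j_r}} − {x₀, v, y_{j_1}, …, y_{j_r}} and all {x₀, u, v, y_{j_1}, …, y_{j_r}} with y_{j_k} ∈ A \ {x₀, u, v}, and set V = Σ_{(u,v) ∈ E} I_{u,v}. Then V equals the kernel of the induced map φ̄ : D(A)/D(A') → D(Ã''). -/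
/-!
Formalization of the Yuzvinsky–Feichtner rational model `D(B)` of the
complement of an arrangement of linear subspaces of `ℂ^l`, together with the
deletion/restriction constructions of the paper.
-/

open scoped Classical

noncomputable section

/-- The type of linear subspaces of `ℂ^l`. -/
abbrev Subsp (l : ℕ) := Submodule ℂ (Fin l → ℂ)

/-- Intersection of a finite set of subspaces (`⊤`, i.e. `ℂ^l`, for the empty set). -/
def inter {l : ℕ} (σ : Finset (Subsp l)) : Subsp l := σ.inf id

/-- Underlying vector space of the Yuzvinsky–Feichtner model: formal ℚ-linear
combinations of finite sets of subspaces (basis elements are the `σ ⊆ B`). -/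
abbrev DFull (l : ℕ) := Finset (Subsp l) →₀ ℚ

/-- 1-based position of `x` inside `σ`, with respect to the linear order `r`. -/
def pos {l : ℕ} (r : LinearOrder (Subsp l)) (σ : Finset (Subsp l)) (x : Subsp l) : ℕ :=
  (σ.filter fun y => r.lt y x).card + 1

/-- Value of the differential on the basis element `σ`:
`dσ = ∑_{j : ∩(σ∖{x_j}) = ∩σ} (−1)^j (σ∖{x_j})`. -/
def dBasis {l : ℕ} (r : LinearOrder (Subsp l)) (σ : Finset (Subsp l)) : DFull l :=
  ∑ x ∈ σ.filter fun x => inter (σ.erase x) = inter σ,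
    ((-1 : ℚ) ^ pos r σ x) • Finsupp.single (σ.erase x) (1 : ℚ)

/-- The differential of the Yuzvinsky–Feichtner complex. -/
def diff {l : ℕ} (r : LinearOrder (Subsp l)) : DFull l →ₗ[ℚ] DFull l :=
  Finsupp.lsum ℚ fun σ => LinearMap.toSpanSingleton ℚ (DFull l) (dBasis r σ)

/-- Codimension of `W` inside the ambient subspace `X` (as an integer). -/
def codimIn {l : ℕ} (X W : Subsp l) : ℤ :=
  (Module.finrank ℂ X : ℤ) - (Module.finrank ℂ (W ⊓ X : Subsp l) : ℤ)

/-- Codimension of `W` in `ℂ^l`. -/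
def codim {l : ℕ} (W : Subsp l) : ℤ := codimIn ⊤ W

/-- Degree of the basis element `σ`: `deg σ = 2 codim (∩σ) − |σ|`, the
codimension being computed inside the ambient space `X`. -/
def degIn {l : ℕ} (X : Subsp l) (σ : Finset (Subsp l)) : ℤ :=
  2 * codimIn X (inter σ) - (σ.card : ℤ)

/-- `D(B)`: the span of the basis elements `σ ⊆ B`. -/
def Dsub {l : ℕ} (B : Finset (Subsp l)) : Submodule ℚ (DFull l) :=
  Submodule.span ℚ {f | ∃ σ : Finset (Subsp l), σ ⊆ B ∧ f = Finsupp.single σ (1 : ℚ)}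

/-- The degree-`q` component of `D(B)` (ambient space `X`). -/
def Dcomp {l : ℕ} (X : Subsp l) (B : Finset (Subsp l)) (q : ℤ) : Submodule ℚ (DFull l) :=
  Submodule.span ℚ
    {f | ∃ σ : Finset (Subsp l), σ ⊆ B ∧ degIn X σ = q ∧ f = Finsupp.single σ (1 : ℚ)}

/-- Degree-`q` cocycles of `D(B)`. -/
def cocycles {l : ℕ} (r : LinearOrder (Subsp l)) (X : Subsp l) (B : Finset (Subsp l)) (q : ℤ) :
    Submodule ℚ (DFull l) :=
  Dcomp X B q ⊓ LinearMap.ker (diff r)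

/-- Degree-`q` coboundaries of `D(B)`. -/
def cobounds {l : ℕ} (r : LinearOrder (Subsp l)) (X : Subsp l) (B : Finset (Subsp l)) (q : ℤ) :
    Submodule ℚ (DFull l) :=
  Dcomp X B q ⊓ Submodule.map (diff r) (Dcomp X B (q - 1))

/-- Degree-`q` cohomology `H^q(D(B))`. -/
abbrev cohomology {l : ℕ} (r : LinearOrder (Subsp l)) (X : Subsp l) (B : Finset (Subsp l)) (q : ℤ) :=
  cocycles r X B q ⧸ Submodule.comap (cocycles r X B q).subtype (cobounds r X B q)

lemma Dcomp_mono {l : ℕ} (X : Subsp l) {B B' : Finset (Subsp l)} (h : B' ⊆ B) (q : ℤ) :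
    Dcomp X B' q ≤ Dcomp X B q :=
  Submodule.span_mono (by rintro f ⟨σ, h1, h2, rfl⟩; exact ⟨σ, h1.trans h, h2, rfl⟩)

lemma cocycles_mono {l : ℕ} (r : LinearOrder (Subsp l)) (X : Subsp l) {B B' : Finset (Subsp l)}
    (h : B' ⊆ B) (q : ℤ) : cocycles r X B' q ≤ cocycles r X B q :=
  inf_le_inf_right _ (Dcomp_mono X h q)

lemma cobounds_mono {l : ℕ} (r : LinearOrder (Subsp l)) (X : Subsp l) {B B' : Finset (Subsp l)}
    (h : B' ⊆ B) (q : ℤ) : cobounds r X B' q ≤ cobounds r X B q :=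
  inf_le_inf (Dcomp_mono X h q) (Submodule.map_mono (Dcomp_mono X h (q - 1)))

/-- The map induced in degree-`q` cohomology by an inclusion of arrangements `B' ⊆ B`
(induced by the inclusion of cochain complexes `D(B') ↪ D(B)`). -/
def inducedMap {l : ℕ} (r : LinearOrder (Subsp l)) (X : Subsp l) {B B' : Finset (Subsp l)}
    (h : B' ⊆ B) (q : ℤ) : cohomology r X B' q →ₗ[ℚ] cohomology r X B q :=
  Submodule.mapQ (Submodule.comap (cocycles r X B' q).subtype (cobounds r X B' q))
    (Submodule.comap (cocycles r X B q).subtype (cobounds r X B q))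
    (Submodule.inclusion (cocycles_mono r X h q)) (by
      intro v hv
      simp only [Submodule.mem_comap, Submodule.subtype_apply, Submodule.coe_inclusion] at hv ⊢
      exact cobounds_mono r X h q hv)

lemma eraseSubset {l : ℕ} (A : Finset (Subsp l)) (x₀ : Subsp l) : A.erase x₀ ⊆ A := by
  intro y hy; exact Finset.mem_of_mem_erase hy

/-- A subspace arrangement: no member is contained in another. -/
def IsArrangement {l : ℕ} (A : Finset (Subsp l)) : Prop :=
  ∀ x ∈ A, ∀ y ∈ A, x ≤ y → x = y

/-- `Ã'' = {x₀ ∩ y | y ∈ A'}`. -/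
def tildeRestriction {l : ℕ} (x₀ : Subsp l) (A' : Finset (Subsp l)) : Finset (Subsp l) :=
  A'.image fun y => x₀ ⊓ y

/-- The restricted arrangement `A''`: the elements of `Ã''` that are not strictly
contained in another element of `Ã''`. -/
def restriction {l : ℕ} (x₀ : Subsp l) (A' : Finset (Subsp l)) : Finset (Subsp l) :=
  (tildeRestriction x₀ A').filter fun w => ∀ w' ∈ tildeRestriction x₀ A', ¬ w < w'

lemma restriction_subset {l : ℕ} (x₀ : Subsp l) (A' : Finset (Subsp l)) :
    restriction x₀ A' ⊆ tildeRestriction x₀ A' := Finset.filter_subset _ _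

/-- `x₀` is a separator: `x₀ ∩ (∩ A') ⊊ ∩ A'`. -/
def IsSeparator {l : ℕ} (A : Finset (Subsp l)) (x₀ : Subsp l) : Prop :=
  x₀ ⊓ inter (A.erase x₀) < inter (A.erase x₀)

/-- The conditions imposed in the paper on the fixed linear order on the
subspaces: `x₀` comes first, the equivalence classes of
`y ∼ z ⟺ x₀ ∩ y = x₀ ∩ z` on `A' = A ∖ {x₀}` are consecutive intervals,
and the order on `Ã''` is compatible with the one on `A'`. -/
def GoodOrder {l : ℕ} (r : LinearOrder (Subsp l)) (A : Finset (Subsp l)) (x₀ : Subsp l) : Prop :=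
  (∀ y ∈ A.erase x₀, r.lt x₀ y) ∧
  (∀ y ∈ A.erase x₀, ∀ z ∈ A.erase x₀, ∀ w ∈ A.erase x₀,
      r.le y z → r.le z w → x₀ ⊓ y = x₀ ⊓ w → x₀ ⊓ y = x₀ ⊓ z) ∧
  (∀ y ∈ A.erase x₀, ∀ z ∈ A.erase x₀, r.lt y z → x₀ ⊓ y ≠ x₀ ⊓ z →
      r.lt (x₀ ⊓ y) (x₀ ⊓ z))

/-- Value of the map `φ` on a basis element `σ`. -/
def phiBasis {l : ℕ} (x₀ : Subsp l) (σ : Finset (Subsp l)) : DFull l :=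
  if x₀ ∈ σ ∧ Set.InjOn (fun y => x₀ ⊓ y) ↑(σ.erase x₀) then
    ((-1 : ℚ) ^ (σ.card - 1)) • Finsupp.single ((σ.erase x₀).image fun y => x₀ ⊓ y) (1 : ℚ)
  else 0

/-- The map `φ : D(A) → D(Ã'')` (defined on the whole ambient space). -/
def phi {l : ℕ} (x₀ : Subsp l) : DFull l →ₗ[ℚ] DFull l :=
  Finsupp.lsum ℚ fun σ => LinearMap.toSpanSingleton ℚ (DFull l) (phiBasis x₀ σ)

lemma phi_apply_single {l : ℕ} (x₀ : Subsp l) (σ : Finset (Subsp l)) :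
    phi x₀ (Finsupp.single σ (1 : ℚ)) = phiBasis x₀ σ := by
  simp [phi]

lemma diff_apply_single {l : ℕ} (r : LinearOrder (Subsp l)) (σ : Finset (Subsp l)) :
    diff r (Finsupp.single σ (1 : ℚ)) = dBasis r σ := by
  simp [diff]

lemma phi_vanish {l : ℕ} (x₀ : Subsp l) {B : Finset (Subsp l)} (hx : x₀ ∉ B) :
    ∀ f ∈ Dsub B, phi x₀ f = 0 := by
  intro f hf
  induction hf using Submodule.span_induction with
  | mem f hfmem =>
      obtain ⟨σ, hσ, rfl⟩ := hfmem
      rw [phi_apply_single]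
      have hx₀σ : ¬ x₀ ∈ σ := fun h => hx (hσ h)
      simp [phiBasis, hx₀σ]
  | zero => simp
  | add f g _ _ hf hg => simp [map_add, hf, hg]
  | smul c f _ hf => simp [map_smul, hf]

lemma diff_mem {l : ℕ} (r : LinearOrder (Subsp l)) {B : Finset (Subsp l)} :
    ∀ f ∈ Dsub B, diff r f ∈ Dsub B := by
  intro f hf
  induction hf using Submodule.span_induction with
  | mem f hfmem =>
      obtain ⟨σ, hσ, rfl⟩ := hfmem
      rw [diff_apply_single, dBasis]
      refine Submodule.sum_mem _ fun x hx => Submodule.smul_mem _ _ ?_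
      exact Submodule.subset_span ⟨σ.erase x, (Finset.erase_subset _ _).trans hσ, rfl⟩
  | zero => simp
  | add f g _ _ hf hg => rw [map_add]; exact (Dsub B).add_mem hf hg
  | smul c f _ hf => rw [map_smul]; exact (Dsub B).smul_mem c hf

/-- The quotient cochain complex `D(A)/D(A')`. -/
abbrev DQuot {l : ℕ} (A : Finset (Subsp l)) (x₀ : Subsp l) :=
  Dsub A ⧸ Submodule.comap (Dsub A).subtype (Dsub (A.erase x₀))

/-- Projection `D(A) → D(A)/D(A')`. -/
def quotProj {l : ℕ} (A : Finset (Subsp l)) (x₀ : Subsp l) : Dsub A →ₗ[ℚ] DQuot A x₀ :=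
  (Submodule.comap (Dsub A).subtype (Dsub (A.erase x₀))).mkQ

/-- The differential, restricted to `D(A)`. -/
def diffRes {l : ℕ} (r : LinearOrder (Subsp l)) (A : Finset (Subsp l)) : Dsub A →ₗ[ℚ] Dsub A :=
  (diff r).restrict fun f hf => diff_mem r f hf

/-- The differential of the quotient complex `D(A)/D(A')`. -/
def diffQuot {l : ℕ} (r : LinearOrder (Subsp l)) (A : Finset (Subsp l)) (x₀ : Subsp l) :
    DQuot A x₀ →ₗ[ℚ] DQuot A x₀ :=
  Submodule.mapQ _ _ (diffRes r A) (by
      intro v hv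
      simp only [Submodule.mem_comap, Submodule.subtype_apply] at hv ⊢
      exact diff_mem r _ hv)

/-- The map `φ̄ : D(A)/D(A') → D(Ã'')` induced by `φ`. -/
def phiBar {l : ℕ} (x₀ : Subsp l) (A : Finset (Subsp l)) : DQuot A x₀ →ₗ[ℚ] DFull l :=
  Submodule.liftQ _ ((phi x₀).comp (Dsub A).subtype) (by
    intro v hv
    simp only [Submodule.mem_comap, Submodule.subtype_apply] at hv
    simp only [LinearMap.mem_ker, LinearMap.comp_apply, Submodule.subtype_apply]
    exact phi_vanish x₀ (Finset.notMem_erase x₀ A) _ hv)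

/-- The subspace `I_{u,v}` of `D(A)/D(A')`, as a subspace of `D(A)` before
projecting: spanned by the `{x₀,u,τ} − {x₀,v,τ}` and the `{x₀,u,v,τ}`. -/
def IuvFull {l : ℕ} (A : Finset (Subsp l)) (x₀ u v : Subsp l) : Submodule ℚ (DFull l) :=
  Submodule.span ℚ
    ({f | ∃ τ : Finset (Subsp l), (↑τ : Set (Subsp l)) ⊆ ↑A \ {x₀, u, v} ∧
        f = Finsupp.single (insert x₀ (insert u τ)) (1 : ℚ)
          - Finsupp.single (insert x₀ (insert v τ)) (1 : ℚ)} ∪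
     {f | ∃ τ : Finset (Subsp l), (↑τ : Set (Subsp l)) ⊆ ↑A \ {x₀, u, v} ∧
        f = Finsupp.single (insert x₀ (insert u (insert v τ))) (1 : ℚ)})

/-- The subspace `I_{u,v} ⊆ D(A)/D(A')`. -/
def Iuv {l : ℕ} (A : Finset (Subsp l)) (x₀ u v : Subsp l) : Submodule ℚ (DQuot A x₀) :=
  Submodule.map (quotProj A x₀) (Submodule.comap (Dsub A).subtype (IuvFull A x₀ u v))

/-- The set `E` of pairs `(y,z)` of distinct elements of `A'` with `x₀ ∩ y = x₀ ∩ z`. -/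
def Epairs {l : ℕ} (A : Finset (Subsp l)) (x₀ : Subsp l) : Set (Subsp l × Subsp l) :=
  {p | p.1 ∈ A.erase x₀ ∧ p.2 ∈ A.erase x₀ ∧ x₀ ⊓ p.1 = x₀ ⊓ p.2 ∧ p.1 ≠ p.2}

/-- The subspace `V = Σ_{(u,v) ∈ E} I_{u,v}` of `D(A)/D(A')`. -/
def Vsub {l : ℕ} (A : Finset (Subsp l)) (x₀ : Subsp l) : Submodule ℚ (DQuot A x₀) :=
  ⨆ p ∈ Epairs A x₀, Iuv A x₀ p.1 p.2

/-- Degree-`q` part of the quotient complex `D(A)/D(A')`. -/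
def DcompQuot {l : ℕ} (X : Subsp l) (A : Finset (Subsp l)) (x₀ : Subsp l) (q : ℤ) :
    Submodule ℚ (DQuot A x₀) :=
  Submodule.map (quotProj A x₀) (Submodule.comap (Dsub A).subtype (Dcomp X A q))

def cocyclesQuot {l : ℕ} (r : LinearOrder (Subsp l)) (X : Subsp l) (A : Finset (Subsp l))
    (x₀ : Subsp l) (q : ℤ) : Submodule ℚ (DQuot A x₀) :=
  DcompQuot X A x₀ q ⊓ LinearMap.ker (diffQuot r A x₀)

def coboundsQuot {l : ℕ} (r : LinearOrder (Subsp l)) (X : Subsp l) (A : Finset (Subsp l))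
    (x₀ : Subsp l) (q : ℤ) : Submodule ℚ (DQuot A x₀) :=
  DcompQuot X A x₀ q ⊓ Submodule.map (diffQuot r A x₀) (DcompQuot X A x₀ (q - 1))

/-- Degree-`q` cohomology of the quotient complex `D(A)/D(A')`. -/
abbrev cohomologyQuot {l : ℕ} (r : LinearOrder (Subsp l)) (X : Subsp l) (A : Finset (Subsp l))
    (x₀ : Subsp l) (q : ℤ) :=
  cocyclesQuot r X A x₀ q ⧸
    Submodule.comap (cocyclesQuot r X A x₀ q).subtype (coboundsQuot r X A x₀ q)

/-- Ungraded cocycles of `D(B)`. -/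
def cocyclesAll {l : ℕ} (r : LinearOrder (Subsp l)) (B : Finset (Subsp l)) :
    Submodule ℚ (DFull l) :=
  Dsub B ⊓ LinearMap.ker (diff r)

/-- Ungraded coboundaries of `D(B)`. -/
def coboundsAll {l : ℕ} (r : LinearOrder (Subsp l)) (B : Finset (Subsp l)) :
    Submodule ℚ (DFull l) :=
  Dsub B ⊓ Submodule.map (diff r) (Dsub B)

/-- Ungraded cohomology `H^*(D(B))`. -/
abbrev cohomologyAll {l : ℕ} (r : LinearOrder (Subsp l)) (B : Finset (Subsp l)) :=
  cocyclesAll r B ⧸ Submodule.comap (cocyclesAll r B).subtype (coboundsAll r B)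

/-- The map `θ : D(A') → D(Ã'')`, `{x_{i₁},…,x_{i_r}} ↦ {x₀ ∩ x_{i₁},…,x₀ ∩ x_{i_r}}`. -/
def theta {l : ℕ} (x₀ : Subsp l) : DFull l →ₗ[ℚ] DFull l :=
  Finsupp.lsum ℚ fun σ =>
    LinearMap.toSpanSingleton ℚ (DFull l) (Finsupp.single (σ.image fun y => x₀ ⊓ y) (1 : ℚ))

/-- The map `k : D(A) → D(A')`, the identity on basis elements not containing
`x₀`, and zero on those containing `x₀`. -/
def kmap {l : ℕ} (x₀ : Subsp l) : DFull l →ₗ[ℚ] DFull l :=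
  Finsupp.lsum ℚ fun σ =>
    if x₀ ∈ σ then 0 else LinearMap.toSpanSingleton ℚ (DFull l) (Finsupp.single σ (1 : ℚ))

/-- The Euler characteristic of `D(A)`:
`χ = Σ_q (−1)^q dim_ℚ H^q(D(A))` (all degrees lie in `[−|A|, 2l]`). -/
def eulerChar {l : ℕ} (r : LinearOrder (Subsp l)) (A : Finset (Subsp l)) : ℚ :=
  ∑ q ∈ Finset.Icc (-(A.card : ℤ)) (2 * l : ℤ),
    (-1 : ℚ) ^ q * (Module.finrank ℚ (cohomology r ⊤ A q) : ℚ)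

/-- The intersection lattice `L(A)`: all intersections of members of `A`
(with `ℂ^l = ∩∅` as bottom element), ordered by reverse inclusion. -/
def latticeSet {l : ℕ} (A : Finset (Subsp l)) : Set (Subsp l) :=
  {W | ∃ S : Finset (Subsp l), S ⊆ A ∧ W = inter S}

/-- `covL A a b`: in the intersection lattice `L(A)` (ordered by reverse
inclusion), `b` covers `a`. -/
def covL {l : ℕ} (A : Finset (Subsp l)) (a b : Subsp l) : Prop :=
  b < a ∧ ∀ c ∈ latticeSet A, ¬(b < c ∧ c < a)

/-- The meet `a ∧ b` in the intersection lattice `L(A)`: the intersection of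
the members of `A` containing both `a` and `b`. -/
def meetL {l : ℕ} (A : Finset (Subsp l)) (a b : Subsp l) : Subsp l :=
  inter (A.filter fun x => a ≤ x ∧ b ≤ x)

/-- `L(A)` is a geometric lattice: it is a finite atomistic semimodular lattice.
(Atoms are the elements covering the bottom element `ℂ^l`; every element is the
join — i.e. intersection — of the atoms it lies above; and the lattice is
(upper) semimodular.  The join of `a` and `b` in `L(A)` is `a ⊓ b`.) -/
def IsGeometricL {l : ℕ} (A : Finset (Subsp l)) : Prop :=
  (∀ a ∈ latticeSet A, a = sInf {t : Subsp l | t ∈ latticeSet A ∧ covL A ⊤ t ∧ a ≤ t}) ∧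
  (∀ a ∈ latticeSet A, ∀ b ∈ latticeSet A, covL A (meetL A a b) a → covL A b (a ⊓ b))

end

noncomputable section Aux

variable {l : ℕ}

/-- Canonical representative of the `∼`-class determined by `w = x₀ ⊓ y`. -/
def rep' (A : Finset (Subsp l)) (x₀ : Subsp l) (w : Subsp l) : Subsp l :=
  if h : ∃ z, z ∈ A.erase x₀ ∧ x₀ ⊓ z = w then h.choose else x₀

lemma rep'_spec {A : Finset (Subsp l)} {x₀ w : Subsp l}
    (h : ∃ z, z ∈ A.erase x₀ ∧ x₀ ⊓ z = w) :
    rep' A x₀ w ∈ A.erase x₀ ∧ x₀ ⊓ rep' A x₀ w = w := by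
  rw [rep', dif_pos h]; exact h.choose_spec

/-- A canonical basis element: contains `x₀` and all other members are
class representatives. -/
def Canon (A : Finset (Subsp l)) (x₀ : Subsp l) (σ : Finset (Subsp l)) : Prop :=
  x₀ ∈ σ ∧ σ ⊆ A ∧ ∀ y ∈ σ.erase x₀, rep' A x₀ (x₀ ⊓ y) = y

def Csub (A : Finset (Subsp l)) (x₀ : Subsp l) : Submodule ℚ (DFull l) :=
  Submodule.span ℚ {f | ∃ σ, Canon A x₀ σ ∧ f = Finsupp.single σ (1 : ℚ)}

/-- Generating set for `W = D(A') + Σ I_{u,v}` inside `D(A)`. -/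
def Wgen (A : Finset (Subsp l)) (x₀ : Subsp l) : Set (DFull l) :=
  {f | ∃ σ, σ ⊆ A.erase x₀ ∧ f = Finsupp.single σ (1 : ℚ)} ∪
  ⋃ p ∈ Epairs A x₀,
    ({f | ∃ τ : Finset (Subsp l), (↑τ : Set (Subsp l)) ⊆ ↑A \ {x₀, p.1, p.2} ∧
        f = Finsupp.single (insert x₀ (insert p.1 τ)) (1 : ℚ)
          - Finsupp.single (insert x₀ (insert p.2 τ)) (1 : ℚ)} ∪
     {f | ∃ τ : Finset (Subsp l), (↑τ : Set (Subsp l)) ⊆ ↑A \ {x₀, p.1, p.2} ∧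
        f = Finsupp.single (insert x₀ (insert p.1 (insert p.2 τ))) (1 : ℚ)})

def Wsub (A : Finset (Subsp l)) (x₀ : Subsp l) : Submodule ℚ (DFull l) :=
  Submodule.span ℚ (Wgen A x₀)

/-- Left inverse of `φ` on canonical elements. -/
def psi (A : Finset (Subsp l)) (x₀ : Subsp l) : DFull l →ₗ[ℚ] DFull l :=
  Finsupp.lsum ℚ fun μ => LinearMap.toSpanSingleton ℚ (DFull l)
    (((-1 : ℚ) ^ μ.card) • Finsupp.single (insert x₀ (μ.image (rep' A x₀))) (1 : ℚ))

lemma psi_apply_single (A : Finset (Subsp l)) (x₀ : Subsp l) (μ : Finset (Subsp l)) :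
    psi A x₀ (Finsupp.single μ (1 : ℚ)) =
      ((-1 : ℚ) ^ μ.card) • Finsupp.single (insert x₀ (μ.image (rep' A x₀))) (1 : ℚ) := by
  simp [psi]

lemma phiBasis_of_not_mem {x₀ : Subsp l} {σ : Finset (Subsp l)} (h : x₀ ∉ σ) :
    phiBasis x₀ σ = 0 := by
  simp [phiBasis, h]

lemma injOn_swap {x₀ u v : Subsp l} (τ : Finset (Subsp l))
    (huv : x₀ ⊓ u = x₀ ⊓ v) (hu : u ∉ τ)
    (h : Set.InjOn (fun y => x₀ ⊓ y) ↑(insert u τ)) :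
    Set.InjOn (fun y => x₀ ⊓ y) ↑(insert v τ) := by
  intro a ha b hb hab
  simp only [Finset.coe_insert, Set.mem_insert_iff, Finset.mem_coe] at ha hb
  have memu : u ∈ (↑(insert u τ) : Set (Subsp l)) := by simp
  have memt : ∀ d ∈ τ, d ∈ (↑(insert u τ) : Set (Subsp l)) := fun d hd => by simp [hd]
  have key : ∀ c, c = v ∨ c ∈ τ → ∀ d ∈ τ, x₀ ⊓ c = x₀ ⊓ d → c = d := by
    rintro c (rfl | hc) d hd hcd
    · have : u = d := h memu (memt d hd) (huv.trans hcd)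
      exact absurd (this ▸ hd) hu
    · exact h (memt c hc) (memt d hd) hcd
  rcases ha with rfl | ha
  · rcases hb with rfl | hb
    · rfl
    · exact key a (Or.inl rfl) b hb hab
  · rcases hb with rfl | hb
    · exact (key b (Or.inl rfl) a ha hab.symm).symm
    · exact h (memt a ha) (memt b hb) hab

lemma phiBasis_pair {x₀ u v : Subsp l} (τ : Finset (Subsp l))
    (hux : u ≠ x₀) (hvx : v ≠ x₀) (huv : x₀ ⊓ u = x₀ ⊓ v)
    (hxτ : x₀ ∉ τ) (hu : u ∉ τ) (hv : v ∉ τ) :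
    phiBasis x₀ (insert x₀ (insert u τ)) = phiBasis x₀ (insert x₀ (insert v τ)) := by
  have hxu : x₀ ∉ insert u τ := by simp [hxτ, Ne.symm hux]
  have hxv : x₀ ∉ insert v τ := by simp [hxτ, Ne.symm hvx]
  have e1 : (insert x₀ (insert u τ)).erase x₀ = insert u τ := Finset.erase_insert hxu
  have e2 : (insert x₀ (insert v τ)).erase x₀ = insert v τ := Finset.erase_insert hxv
  have hc1 : (insert x₀ (insert u τ)).card = τ.card + 2 := by
    rw [Finset.card_insert_of_notMem hxu, Finset.card_insert_of_notMem hu]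
  have hc2 : (insert x₀ (insert v τ)).card = τ.card + 2 := by
    rw [Finset.card_insert_of_notMem hxv, Finset.card_insert_of_notMem hv]
  have himg : (insert u τ).image (fun y => x₀ ⊓ y) = (insert v τ).image (fun y => x₀ ⊓ y) := by
    rw [Finset.image_insert, Finset.image_insert, huv]
  have hinj : Set.InjOn (fun y => x₀ ⊓ y) ↑(insert u τ) ↔
      Set.InjOn (fun y => x₀ ⊓ y) ↑(insert v τ) :=
    ⟨injOn_swap τ huv hu, injOn_swap τ huv.symm hv⟩
  by_cases h : Set.InjOn (fun y => x₀ ⊓ y) ↑(insert u τ)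
  · rw [phiBasis, phiBasis, if_pos ⟨Finset.mem_insert_self _ _, by rwa [e1]⟩,
      if_pos ⟨Finset.mem_insert_self _ _, by rw [e2]; exact hinj.mp h⟩,
      e1, e2, hc1, hc2, himg]
  · rw [phiBasis, phiBasis, if_neg, if_neg]
    · rintro ⟨-, h2⟩; rw [e2] at h2; exact h (hinj.mpr h2)
    · rintro ⟨-, h2⟩; rw [e1] at h2; exact h h2

lemma phiBasis_collision {x₀ : Subsp l} {σ : Finset (Subsp l)} {u v : Subsp l}
    (hu : u ∈ σ.erase x₀) (hv : v ∈ σ.erase x₀) (huv : u ≠ v) (h : x₀ ⊓ u = x₀ ⊓ v) :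
    phiBasis x₀ σ = 0 := by
  rw [phiBasis, if_neg]
  rintro ⟨-, hinj⟩
  exact huv (hinj (Finset.mem_coe.mpr hu) (Finset.mem_coe.mpr hv) h)

lemma Wsub_le_ker_phi (A : Finset (Subsp l)) (x₀ : Subsp l) :
    Wsub A x₀ ≤ LinearMap.ker (phi x₀) := by
  rw [Wsub, Submodule.span_le]
  rintro f (⟨σ, hσ, rfl⟩ | hf)
  · have : x₀ ∉ σ := fun h => Finset.notMem_erase x₀ A (hσ h)
    simp only [SetLike.mem_coe, LinearMap.mem_ker, phi_apply_single,
      phiBasis_of_not_mem this]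
  · simp only [Set.mem_iUnion] at hf
    obtain ⟨p, hp, hf⟩ := hf
    obtain ⟨hp1, hp2, hp3, hp4⟩ := hp
    have hp1x := (Finset.mem_erase.mp hp1).1
    have hp2x := (Finset.mem_erase.mp hp2).1
    rcases hf with ⟨τ, hτ, rfl⟩ | ⟨τ, hτ, rfl⟩
    · have hxτ : x₀ ∉ τ := fun h => (hτ h).2 (by simp)
      have hu : p.1 ∉ τ := fun h => (hτ h).2 (by simp)
      have hv : p.2 ∉ τ := fun h => (hτ h).2 (by simp)
      simp only [SetLike.mem_coe, LinearMap.mem_ker, map_sub, phi_apply_single]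
      rw [phiBasis_pair τ hp1x hp2x hp3 hxτ hu hv, sub_self]
    · have hxτ : x₀ ∉ insert p.1 (insert p.2 τ) := by
        simp only [Finset.mem_insert]
        rintro (rfl | rfl | h)
        exacts [hp1x rfl, hp2x rfl, (hτ h).2 (by simp)]
      have e : (insert x₀ (insert p.1 (insert p.2 τ))).erase x₀ =
          insert p.1 (insert p.2 τ) := Finset.erase_insert hxτ
      simp only [SetLike.mem_coe, LinearMap.mem_ker, phi_apply_single]
      exact phiBasis_collision (u := p.1) (v := p.2)
        (by rw [e]; simp) (by rw [e]; simp) hp4 hp3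

lemma psi_phi_canon (A : Finset (Subsp l)) (x₀ : Subsp l) :
    ∀ f ∈ Csub A x₀, psi A x₀ (phi x₀ f) = f := by
  have : Csub A x₀ ≤ LinearMap.ker ((psi A x₀).comp (phi x₀) - LinearMap.id) := by
    rw [Csub, Submodule.span_le]
    rintro f ⟨σ, ⟨hx, hσA, hcanon⟩, rfl⟩
    have hinj : Set.InjOn (fun y => x₀ ⊓ y) ↑(σ.erase x₀) := by
      intro a ha b hb hab
      have hab' : x₀ ⊓ a = x₀ ⊓ b := hab
      rw [← hcanon a (Finset.mem_coe.mp ha), ← hcanon b (Finset.mem_coe.mp hb), hab']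
    have hcard : ((σ.erase x₀).image fun y => x₀ ⊓ y).card = σ.card - 1 := by
      rw [Finset.card_image_of_injOn hinj, Finset.card_erase_of_mem hx]
    have himg : (((σ.erase x₀).image fun y => x₀ ⊓ y).image (rep' A x₀)) = σ.erase x₀ := by
      rw [Finset.image_image]
      calc (σ.erase x₀).image (rep' A x₀ ∘ fun y => x₀ ⊓ y)
          = (σ.erase x₀).image id := Finset.image_congr fun y hy => hcanon y hy
        _ = σ.erase x₀ := Finset.image_id
    simp only [SetLike.mem_coe, LinearMap.mem_ker, LinearMap.sub_apply, LinearMap.comp_apply,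
      LinearMap.id_apply, sub_eq_zero, phi_apply_single]
    rw [phiBasis, if_pos ⟨hx, hinj⟩, map_smul, psi_apply_single, hcard, himg,
      Finset.insert_erase hx, smul_smul, ← pow_add]
    have : (-1 : ℚ) ^ (σ.card - 1 + (σ.card - 1)) = 1 := by
      rw [← two_mul, pow_mul]; norm_num
    rw [this, one_smul]
  intro f hf
  have := this hf
  rw [LinearMap.mem_ker, LinearMap.sub_apply, LinearMap.comp_apply, LinearMap.id_apply,
    sub_eq_zero] at this
  exact this

lemma reduction (A : Finset (Subsp l)) (x₀ : Subsp l) (hx₀ : x₀ ∈ A) :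
    ∀ n (σ : Finset (Subsp l)), σ ⊆ A →
      ((σ.erase x₀).filter fun y => rep' A x₀ (x₀ ⊓ y) ≠ y).card = n →
      Finsupp.single σ (1 : ℚ) ∈ Wsub A x₀ ⊔ Csub A x₀ := by
  intro n
  induction n using Nat.strong_induction_on with
  | _ n ih =>
  intro σ hσA hcard
  by_cases hx : x₀ ∈ σ
  · by_cases hcol : ∃ y ∈ σ.erase x₀, ∃ z ∈ σ.erase x₀, y ≠ z ∧ x₀ ⊓ y = x₀ ⊓ z
    · -- collision: σ is a type-2 generator
      obtain ⟨y, hy, z, hz, hyz, hcap⟩ := hcol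
      set τ := ((σ.erase x₀).erase y).erase z with hτdef
      have hzmem : z ∈ (σ.erase x₀).erase y := Finset.mem_erase.mpr ⟨Ne.symm hyz, hz⟩
      have hrec : insert x₀ (insert y (insert z τ)) = σ := by
        rw [hτdef, Finset.insert_erase hzmem, Finset.insert_erase hy, Finset.insert_erase hx]
      have hyA : y ∈ A.erase x₀ :=
        Finset.mem_erase.mpr ⟨(Finset.mem_erase.mp hy).1, hσA (Finset.mem_of_mem_erase hy)⟩
      have hzA : z ∈ A.erase x₀ :=
        Finset.mem_erase.mpr ⟨(Finset.mem_erase.mp hz).1, hσA (Finset.mem_of_mem_erase hz)⟩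
      have hτ : (↑τ : Set (Subsp l)) ⊆ ↑A \ {x₀, y, z} := by
        intro w hw
        have hw' := Finset.mem_coe.mp hw
        have hwz := Finset.mem_erase.mp hw'
        have hwy := Finset.mem_erase.mp hwz.2
        have hwx := Finset.mem_erase.mp hwy.2
        exact ⟨hσA hwx.2, by simp [hwx.1, hwy.1, hwz.1]⟩
      refine Submodule.mem_sup_left (Submodule.subset_span (Or.inr ?_))
      simp only [Set.mem_iUnion]
      exact ⟨(y, z), ⟨hyA, hzA, hcap, hyz⟩, Or.inr ⟨τ, hτ, by rw [hrec]⟩⟩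
    · push_neg at hcol
      have hinj : ∀ a ∈ σ.erase x₀, ∀ b ∈ σ.erase x₀, x₀ ⊓ a = x₀ ⊓ b → a = b := by
        intro a ha b hb hab
        by_contra hne
        exact (hcol a ha b hb hne) hab
      by_cases hbad : ∃ y ∈ σ.erase x₀, rep' A x₀ (x₀ ⊓ y) ≠ y
      · -- swap a non-representative for its representative
        obtain ⟨y, hy, hyb⟩ := hbad
        have hyA : y ∈ A.erase x₀ :=
          Finset.mem_erase.mpr ⟨(Finset.mem_erase.mp hy).1, hσA (Finset.mem_of_mem_erase hy)⟩
        obtain ⟨hvA, hvcap⟩ := rep'_spec (A := A) (x₀ := x₀) ⟨y, hyA, rfl⟩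
        set v := rep' A x₀ (x₀ ⊓ y) with hvdef
        set τ := (σ.erase x₀).erase y with hτdef
        have hxτ : x₀ ∉ τ := fun h => (Finset.mem_erase.mp (Finset.mem_of_mem_erase h)).1 rfl
        have hyτ : y ∉ τ := Finset.notMem_erase _ _
        have hvτ : v ∉ τ := by
          intro h
          exact hyb (hinj v (Finset.mem_of_mem_erase h) y hy hvcap)
        have hrec : insert x₀ (insert y τ) = σ := by
          rw [hτdef, Finset.insert_erase hy, Finset.insert_erase hx]
        have hτA : (↑τ : Set (Subsp l)) ⊆ ↑A \ {x₀, y, v} := by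
          intro w hw
          have hw' := Finset.mem_coe.mp hw
          have hwy := Finset.mem_erase.mp hw'
          have hwx := Finset.mem_erase.mp hwy.2
          refine ⟨hσA hwx.2, ?_⟩
          simp only [Set.mem_insert_iff, Set.mem_singleton_iff]
          push_neg
          exact ⟨hwx.1, hwy.1, fun h => hvτ (h ▸ hw')⟩
        have hgen : Finsupp.single σ (1 : ℚ)
            - Finsupp.single (insert x₀ (insert v τ)) (1 : ℚ) ∈ Wsub A x₀ := by
          refine Submodule.subset_span (Or.inr ?_)
          simp only [Set.mem_iUnion]
          exact ⟨(y, v), ⟨hyA, hvA, hvcap.symm, Ne.symm hyb⟩,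
            Or.inl ⟨τ, hτA, by rw [hrec]⟩⟩
        -- the new set has strictly fewer bad elements
        have hvx : v ≠ x₀ := (Finset.mem_erase.mp hvA).1
        have hxvτ : x₀ ∉ insert v τ := by simp [hxτ, Ne.symm hvx]
        have herase : (insert x₀ (insert v τ)).erase x₀ = insert v τ :=
          Finset.erase_insert hxvτ
        have hvgood : rep' A x₀ (x₀ ⊓ v) = v := by rw [hvcap]
        have hfilter : ((insert v τ).filter fun w => rep' A x₀ (x₀ ⊓ w) ≠ w) =
            τ.filter fun w => rep' A x₀ (x₀ ⊓ w) ≠ w := by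
          rw [Finset.filter_insert, if_neg (by simp [hvgood])]
        have hfilterold : ((σ.erase x₀).filter fun w => rep' A x₀ (x₀ ⊓ w) ≠ w) =
            insert y (τ.filter fun w => rep' A x₀ (x₀ ⊓ w) ≠ w) := by
          have : σ.erase x₀ = insert y τ := by rw [hτdef, Finset.insert_erase hy]
          rw [this, Finset.filter_insert, if_pos hyb]
        have hlt : ((τ.filter fun w => rep' A x₀ (x₀ ⊓ w) ≠ w)).card < n := by
          rw [← hcard, hfilterold, Finset.card_insert_of_notMem
            (fun h => hyτ (Finset.mem_of_mem_filter _ h))]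
          omega
        have hσ'A : insert x₀ (insert v τ) ⊆ A := by
          intro w hw
          rcases Finset.mem_insert.mp hw with rfl | hw
          · exact hx₀
          rcases Finset.mem_insert.mp hw with rfl | hw
          · exact Finset.mem_of_mem_erase hvA
          · exact hσA (Finset.mem_of_mem_erase (Finset.mem_of_mem_erase hw))
        have hih := ih _ hlt (insert x₀ (insert v τ)) hσ'A (by rw [herase, hfilter])
        have : Finsupp.single σ (1 : ℚ) =
            (Finsupp.single σ (1 : ℚ) - Finsupp.single (insert x₀ (insert v τ)) (1 : ℚ))
            + Finsupp.single (insert x₀ (insert v τ)) (1 : ℚ) := by abel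
        rw [this]
        exact Submodule.add_mem _ (Submodule.mem_sup_left hgen) hih
      · -- canonical
        push_neg at hbad
        exact Submodule.mem_sup_right (Submodule.subset_span ⟨σ, ⟨hx, hσA, hbad⟩, rfl⟩)
  · -- σ ⊆ A' : element of D(A')
    refine Submodule.mem_sup_left (Submodule.subset_span (Or.inl ⟨σ, ?_, rfl⟩))
    intro y hy
    exact Finset.mem_erase.mpr ⟨fun h => hx (h ▸ hy), hσA hy⟩

lemma Wgen_subset_DsubA (A : Finset (Subsp l)) (x₀ : Subsp l) (hx₀ : x₀ ∈ A) :
    Wsub A x₀ ≤ Dsub A := by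
  rw [Wsub, Submodule.span_le]
  rintro f (⟨σ, hσ, rfl⟩ | hf)
  · exact Submodule.subset_span ⟨σ, hσ.trans (eraseSubset A x₀), rfl⟩
  · simp only [Set.mem_iUnion] at hf
    obtain ⟨p, hp, hf⟩ := hf
    have hsub : ∀ τ : Finset (Subsp l), (↑τ : Set (Subsp l)) ⊆ ↑A \ {x₀, p.1, p.2} →
        ∀ s ⊆ insert x₀ (insert p.1 (insert p.2 τ)), s ⊆ A := by
      intro τ hτ s hs w hw
      have := hs hw
      simp only [Finset.mem_insert] at this
      rcases this with rfl | rfl | rfl | h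
      exacts [hx₀, Finset.mem_of_mem_erase hp.1, Finset.mem_of_mem_erase hp.2.1,
        (hτ h).1]
    rcases hf with ⟨τ, hτ, rfl⟩ | ⟨τ, hτ, rfl⟩
    · refine Submodule.sub_mem _ (Submodule.subset_span ⟨_, ?_, rfl⟩)
        (Submodule.subset_span ⟨_, ?_, rfl⟩)
      · exact hsub τ hτ _ (by intro w hw; simp only [Finset.mem_insert] at hw ⊢; tauto)
      · exact hsub τ hτ _ (by intro w hw; simp only [Finset.mem_insert] at hw ⊢; tauto)
    · exact Submodule.subset_span ⟨_, hsub τ hτ _ (subset_refl _), rfl⟩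

lemma Wsub_maps_to_Vsub (A : Finset (Subsp l)) (x₀ : Subsp l) (hx₀ : x₀ ∈ A) :
    ∀ f, ∀ hfW : f ∈ Wsub A x₀, ∀ hfA : f ∈ Dsub A,
      quotProj A x₀ ⟨f, hfA⟩ ∈ Vsub A x₀ := by
  intro f hfW
  induction hfW using Submodule.span_induction with
  | mem f hfmem =>
      intro hfA
      rcases hfmem with ⟨σ, hσ, rfl⟩ | hf
      · have : quotProj A x₀ ⟨_, hfA⟩ = 0 := by
          rw [quotProj, Submodule.mkQ_apply, Submodule.Quotient.mk_eq_zero]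
          exact Submodule.subset_span ⟨σ, hσ, rfl⟩
        rw [this]; exact Submodule.zero_mem _
      · simp only [Set.mem_iUnion] at hf
        obtain ⟨p, hp, hf⟩ := hf
        have hIuv : f ∈ IuvFull A x₀ p.1 p.2 := Submodule.subset_span hf
        have : quotProj A x₀ ⟨f, hfA⟩ ∈ Iuv A x₀ p.1 p.2 :=
          Submodule.mem_map_of_mem hIuv
        exact (le_iSup₂_of_le p hp le_rfl : Iuv A x₀ p.1 p.2 ≤ Vsub A x₀) this
  | zero =>
      intro hfA
      have : (⟨0, hfA⟩ : Dsub A) = 0 := rfl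
      rw [this, map_zero]; exact Submodule.zero_mem _
  | add f g hf hg ihf ihg =>
      intro hfA
      have hfA' := Wgen_subset_DsubA A x₀ hx₀ hf
      have hgA' := Wgen_subset_DsubA A x₀ hx₀ hg
      have : (⟨f + g, hfA⟩ : Dsub A) = ⟨f, hfA'⟩ + ⟨g, hgA'⟩ := rfl
      rw [this, map_add]
      exact Submodule.add_mem _ (ihf hfA') (ihg hgA')
  | smul c f hf ihf =>
      intro hfA
      have hfA' := Wgen_subset_DsubA A x₀ hx₀ hf
      have : (⟨c • f, hfA⟩ : Dsub A) = c • (⟨f, hfA'⟩ : Dsub A) := rfl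
      rw [this, map_smul]
      exact Submodule.smul_mem _ _ (ihf hfA')

end Aux

/-- Lemma 3.2. In `D(A)/D(A')`, the subspace
`V = Σ_{(u,v) ∈ E} I_{u,v}` equals the kernel of the induced map
`φ̄ : D(A)/D(A') → D(Ã'')`. -/
theorem statement4 {l : ℕ} (A : Finset (Subsp l))
    (harr : IsArrangement A) (x₀ : Subsp l) (hx₀ : x₀ ∈ A) :
    Vsub A x₀ = LinearMap.ker (phiBar x₀ A) := by
  apply le_antisymm
  · -- V ⊆ ker φ̄
    rw [Vsub]
    refine iSup₂_le fun p hp => ?_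
    rw [Iuv, Submodule.map_le_iff_le_comap]
    intro v hv
    simp only [Submodule.mem_comap, Submodule.subtype_apply] at hv
    simp only [Submodule.mem_comap, LinearMap.mem_ker]
    have hIW : IuvFull A x₀ p.1 p.2 ≤ Wsub A x₀ := by
      rw [IuvFull, Wsub]
      refine Submodule.span_mono fun f hf => ?_
      exact Or.inr (Set.mem_iUnion₂.mpr ⟨p, hp, hf⟩)
    have hker : phi x₀ (↑v : DFull l) = 0 := Wsub_le_ker_phi A x₀ (hIW hv)
    show phiBar x₀ A (quotProj A x₀ v) = 0
    rw [quotProj, phiBar, Submodule.mkQ_apply, Submodule.liftQ_apply]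
    simpa using hker
  · -- ker φ̄ ⊆ V
    intro x hx
    obtain ⟨v, rfl⟩ := Submodule.mkQ_surjective _ x
    have hphi : phi x₀ (↑v : DFull l) = 0 := by
      have := LinearMap.mem_ker.mp hx
      rw [phiBar, Submodule.mkQ_apply, Submodule.liftQ_apply] at this
      simpa using this
    have hvA : (↑v : DFull l) ∈ Dsub A := v.2
    have hmem : (↑v : DFull l) ∈ Wsub A x₀ ⊔ Csub A x₀ := by
      refine Submodule.span_le.mpr ?_ hvA
      rintro f ⟨σ, hσ, rfl⟩
      exact reduction A x₀ hx₀ _ σ hσ rfl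
    obtain ⟨w, hw, c, hc, hwc⟩ := Submodule.mem_sup.mp hmem
    have hphiw : phi x₀ w = 0 := Wsub_le_ker_phi A x₀ hw
    have hphic : phi x₀ c = 0 := by
      have : phi x₀ (w + c) = 0 := by rw [hwc]; exact hphi
      rw [map_add, hphiw, zero_add] at this
      exact this
    have hc0 : c = 0 := by
      have := psi_phi_canon A x₀ c hc
      rw [hphic, map_zero] at this
      exact this.symm
    have hvW : (↑v : DFull l) ∈ Wsub A x₀ := by
      rw [← hwc, hc0, add_zero]; exact hw
    have := Wsub_maps_to_Vsub A x₀ hx₀ (↑v) hvW v.2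
    exact this
end

section
/- Let A be a subspace arrangement in ℂ^l, x₀ ∈ A, A' = A \ {x₀}, E = {(y,z) ∈ A' × A' : x₀ ∩ y = x₀ ∩ z, y ≠ z}, and V = Σ_{(u,v) ∈ E} I_{u,v} ⊆ D(A)/D(A'). Then d(V) ⊆ V and the complex V is acyclic: every cocycle in V is the coboundary of an element of V. -/
/-!
Formalization of the Yuzvinsky–Feichtner rational model `D(B)` of the
complement of an arrangement of linear subspaces of `ℂ^l`, together with the
deletion/restriction constructions of the paper.
-/

open scoped Classical

/-! ### Auxiliary infrastructure for Statement 6 -/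

noncomputable section
namespace S6

variable {l : ℕ}

/-! #### Basic lemmas about `Dsub` -/

lemma single_mem_Dsub {B σ : Finset (Subsp l)} (h : σ ⊆ B) :
    Finsupp.single σ (1 : ℚ) ∈ Dsub B :=
  Submodule.subset_span ⟨σ, h, rfl⟩

lemma mem_Dsub_of_support {B : Finset (Subsp l)} {f : DFull l}
    (h : ∀ σ ∈ f.support, σ ⊆ B) : f ∈ Dsub B := by
  rw [← Finsupp.sum_single f, Finsupp.sum]
  refine Submodule.sum_mem _ fun σ hσ => ?_
  have hs : Finsupp.single σ (f σ) = f σ • Finsupp.single σ (1 : ℚ) := by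
    rw [Finsupp.smul_single, smul_eq_mul, mul_one]
  rw [hs]
  exact Submodule.smul_mem _ _ (single_mem_Dsub (h σ hσ))

lemma support_subset_of_mem_Dsub {B : Finset (Subsp l)} {f : DFull l}
    (hf : f ∈ Dsub B) : ∀ σ ∈ f.support, σ ⊆ B := by
  induction hf using Submodule.span_induction with
  | mem f hfmem =>
      obtain ⟨σ, hσ, rfl⟩ := hfmem
      intro τ hτ
      have := Finsupp.support_single_subset hτ
      simp only [Finset.mem_singleton] at this
      subst this; exact hσ
  | zero => simp
  | add f g _ _ hf hg =>
      intro τ hτ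
      rcases Finset.mem_union.mp (Finsupp.support_add hτ) with h | h
      · exact hf τ h
      · exact hg τ h
  | smul c f _ hf =>
      intro τ hτ
      exact hf τ (Finsupp.support_smul hτ)

lemma Dsub_congr {B B' : Finset (Subsp l)} (h : ∀ σ, σ ∈ B ↔ σ ∈ B') :
    Dsub B = Dsub B' := by
  have : B = B' := Finset.ext h
  rw [this]

/-! #### Basic lemmas about `inter` -/

lemma inter_insert (r : LinearOrder (Subsp l)) (a : Subsp l) (σ : Finset (Subsp l)) :
    inter (insert a σ) = a ⊓ inter σ := Finset.inf_insert

lemma inter_le {σ : Finset (Subsp l)} {a : Subsp l} (h : a ∈ σ) : inter σ ≤ a :=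
  Finset.inf_le h

lemma inter_erase (r : LinearOrder (Subsp l)) {σ : Finset (Subsp l)} {a : Subsp l} (h : a ∈ σ) :
    a ⊓ inter (σ.erase a) = inter σ := by
  conv_rhs => rw [← Finset.insert_erase h, inter_insert r]

lemma inter_erase_classmate (r : LinearOrder (Subsp l)) {σ : Finset (Subsp l)} {x₀ z u : Subsp l}
    (hx : x₀ ∈ σ) (hz : z ∈ σ) (hu : u ∈ σ) (hzu : z ≠ u) (hxu : x₀ ≠ u)
    (hcl : x₀ ⊓ z = x₀ ⊓ u) : inter (σ.erase u) = inter σ := by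
  have h1 : inter (σ.erase u) ≤ u := by
    have h2 : inter (σ.erase u) ≤ x₀ ⊓ z :=
      le_inf (inter_le (Finset.mem_erase.mpr ⟨hxu, hx⟩))
        (inter_le (Finset.mem_erase.mpr ⟨hzu, hz⟩))
    exact h2.trans (hcl ▸ inf_le_right)
  rw [← inter_erase r hu]
  exact (inf_eq_right.mpr h1).symm

lemma inter_insert_classmate (r : LinearOrder (Subsp l)) {ρ : Finset (Subsp l)} {x₀ u m : Subsp l}
    (hx : x₀ ∈ ρ) (hu : u ∈ ρ) (hcl : x₀ ⊓ u = x₀ ⊓ m) :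
    inter (insert m ρ) = inter ρ := by
  rw [inter_insert r]
  refine inf_eq_right.mpr ?_
  exact (le_inf (inter_le hx) (inter_le hu)).trans (hcl ▸ inf_le_right)

/-! #### Basic lemmas about `pos` -/

lemma pos_insert (r : LinearOrder (Subsp l)) {σ : Finset (Subsp l)} {m y : Subsp l}
    (hm : m ∉ σ) (hy : y ≠ m) :
    pos r (insert m σ) y = pos r σ y + (if r.lt m y then 1 else 0) := by
  unfold pos
  rw [Finset.filter_insert]
  by_cases h : r.lt m y
  · rw [if_pos h, Finset.card_insert_of_notMem
      (fun hc => hm (Finset.mem_of_mem_filter _ hc)), if_pos h]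
  · rw [if_neg h, if_neg h]

lemma pos_erase (r : LinearOrder (Subsp l)) {σ : Finset (Subsp l)} {y x : Subsp l}
    (hy : y ∈ σ) (hxy : x ≠ y) :
    pos r σ x = pos r (σ.erase y) x + (if r.lt y x then 1 else 0) := by
  conv_lhs => rw [← Finset.insert_erase hy]
  exact pos_insert r (Finset.notMem_erase y σ) hxy

lemma neg_one_pow_add_ite (n : ℕ) (c : Prop) [Decidable c] :
    ((-1 : ℚ)) ^ (n + if c then 1 else 0) = (if c then (-1 : ℚ) else 1) * (-1) ^ n := by
  split <;> simp [pow_succ]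

/-! #### The class operators `Π_w` and `H_w` -/

/-- The `∼`-equivalence class of value `w` inside `A' = A ∖ {x₀}`. -/
def classSet (A : Finset (Subsp l)) (x₀ w : Subsp l) : Finset (Subsp l) :=
  (A.erase x₀).filter fun y => x₀ ⊓ y = w

lemma mem_classSet (A : Finset (Subsp l)) (x₀ : Subsp l) {w y : Subsp l} :
    y ∈ classSet A x₀ w ↔ (y ∈ A ∧ y ≠ x₀ ∧ x₀ ⊓ y = w) := by
  unfold classSet
  rw [Finset.mem_filter, Finset.mem_erase]
  tauto

/-- The minimal element (for the order `r`) of the class of value `w`. -/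
def mW (r : LinearOrder (Subsp l)) (A : Finset (Subsp l)) (x₀ w : Subsp l) : Subsp l :=
  if h : (classSet A x₀ w).Nonempty then @Finset.min' _ r _ h else x₀

lemma mW_mem (r : LinearOrder (Subsp l)) (A : Finset (Subsp l)) (x₀ : Subsp l) {w : Subsp l}
    (h : (classSet A x₀ w).Nonempty) :
    mW r A x₀ w ∈ classSet A x₀ w := by
  rw [mW, dif_pos h]; exact @Finset.min'_mem _ r _ h

lemma mW_le (r : LinearOrder (Subsp l)) (A : Finset (Subsp l)) (x₀ : Subsp l) {w y : Subsp l}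
    (hy : y ∈ classSet A x₀ w) :
    r.le (mW r A x₀ w) y := by
  rw [mW, dif_pos ⟨y, hy⟩]; exact @Finset.min'_le _ r _ y hy

/-- Basis value of the class-reduction operator `Π_w`. -/
def piB (r : LinearOrder (Subsp l)) (A : Finset (Subsp l)) (x₀ w : Subsp l)
    (σ : Finset (Subsp l)) : DFull l :=
  if 2 ≤ (σ ∩ classSet A x₀ w).card then 0
  else if (σ ∩ classSet A x₀ w).card = 1 then
    Finsupp.single (insert (mW r A x₀ w) (σ \ classSet A x₀ w)) (1 : ℚ)
  else Finsupp.single σ (1 : ℚ)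

/-- Basis value of the contraction operator `H_w`. -/
def hB (r : LinearOrder (Subsp l)) (A : Finset (Subsp l)) (x₀ w : Subsp l)
    (σ : Finset (Subsp l)) : DFull l :=
  if x₀ ∈ σ ∧ (σ ∩ classSet A x₀ w).Nonempty ∧ mW r A x₀ w ∉ σ then
    ((-1 : ℚ) ^ pos r (insert (mW r A x₀ w) σ) (mW r A x₀ w)) •
      Finsupp.single (insert (mW r A x₀ w) σ) (1 : ℚ)
  else 0

/-- The class-reduction operator `Π_w` on `D`. -/
def piM (r : LinearOrder (Subsp l)) (A : Finset (Subsp l)) (x₀ w : Subsp l) :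
    DFull l →ₗ[ℚ] DFull l :=
  Finsupp.lsum ℚ fun σ => LinearMap.toSpanSingleton ℚ (DFull l) (piB r A x₀ w σ)

/-- The contraction operator `H_w` on `D`. -/
def hM (r : LinearOrder (Subsp l)) (A : Finset (Subsp l)) (x₀ w : Subsp l) :
    DFull l →ₗ[ℚ] DFull l :=
  Finsupp.lsum ℚ fun σ => LinearMap.toSpanSingleton ℚ (DFull l) (hB r A x₀ w σ)

lemma piM_single (r : LinearOrder (Subsp l)) (A : Finset (Subsp l)) (x₀ w : Subsp l)
    (σ : Finset (Subsp l)) :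
    piM r A x₀ w (Finsupp.single σ (1 : ℚ)) = piB r A x₀ w σ := by simp [piM]

lemma hM_single (r : LinearOrder (Subsp l)) (A : Finset (Subsp l)) (x₀ w : Subsp l)
    (σ : Finset (Subsp l)) :
    hM r A x₀ w (Finsupp.single σ (1 : ℚ)) = hB r A x₀ w σ := by simp [hM]

lemma classSet_nonempty_of_inter (r : LinearOrder (Subsp l)) {A : Finset (Subsp l)} {x₀ w : Subsp l}
    {σ : Finset (Subsp l)} (h : (σ ∩ classSet A x₀ w).Nonempty) :
    (classSet A x₀ w).Nonempty :=
  ⟨h.choose, (Finset.mem_inter.mp h.choose_spec).2⟩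

lemma piB_mem (r : LinearOrder (Subsp l)) (A : Finset (Subsp l)) (x₀ : Subsp l) {w : Subsp l}
    {σ : Finset (Subsp l)} (hσ : σ ⊆ A) : piB r A x₀ w σ ∈ Dsub A := by
  unfold piB
  split
  · exact Submodule.zero_mem _
  split
  · rename_i h2 h1
    refine single_mem_Dsub (Finset.insert_subset ?_ ((Finset.sdiff_subset).trans hσ))
    have hne : (σ ∩ classSet A x₀ w).Nonempty := Finset.card_pos.mp (by omega)
    exact ((mem_classSet A x₀).mp (mW_mem r A x₀ (classSet_nonempty_of_inter r hne))).1
  · exact single_mem_Dsub hσ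

lemma piB_mem' (r : LinearOrder (Subsp l)) (A : Finset (Subsp l)) (x₀ : Subsp l) {w : Subsp l}
    {σ : Finset (Subsp l)} (hσ : σ ⊆ A.erase x₀) :
    piB r A x₀ w σ ∈ Dsub (A.erase x₀) := by
  unfold piB
  split
  · exact Submodule.zero_mem _
  split
  · rename_i h2 h1
    refine single_mem_Dsub (Finset.insert_subset ?_ ((Finset.sdiff_subset).trans hσ))
    have hne : (σ ∩ classSet A x₀ w).Nonempty := Finset.card_pos.mp (by omega)
    have := (mem_classSet A x₀).mp (mW_mem r A x₀ (classSet_nonempty_of_inter r hne))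
    exact Finset.mem_erase.mpr ⟨this.2.1, this.1⟩
  · exact single_mem_Dsub hσ

lemma hB_mem (r : LinearOrder (Subsp l)) (A : Finset (Subsp l)) (x₀ : Subsp l) {w : Subsp l}
    {σ : Finset (Subsp l)} (hσ : σ ⊆ A) : hB r A x₀ w σ ∈ Dsub A := by
  unfold hB
  split
  · rename_i h
    refine Submodule.smul_mem _ _ (single_mem_Dsub (Finset.insert_subset ?_ hσ))
    exact ((mem_classSet A x₀).mp (mW_mem r A x₀ (classSet_nonempty_of_inter r h.2.1))).1
  · exact Submodule.zero_mem _

lemma hB_zero' (r : LinearOrder (Subsp l)) (A : Finset (Subsp l)) (x₀ : Subsp l) {w : Subsp l}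
    {σ : Finset (Subsp l)} (hσ : x₀ ∉ σ) : hB r A x₀ w σ = 0 := by
  unfold hB
  rw [if_neg]
  intro h
  exact hσ h.1

lemma piM_mem (r : LinearOrder (Subsp l)) (A : Finset (Subsp l)) (x₀ : Subsp l) {w : Subsp l}
    {f : DFull l} (hf : f ∈ Dsub A) : piM r A x₀ w f ∈ Dsub A := by
  induction hf using Submodule.span_induction with
  | mem f hfmem =>
      obtain ⟨σ, hσ, rfl⟩ := hfmem
      rw [piM_single]; exact piB_mem r A x₀ hσ
  | zero => simp
  | add f g _ _ hf hg => rw [map_add]; exact Submodule.add_mem _ hf hg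
  | smul c f _ hf => rw [map_smul]; exact Submodule.smul_mem _ _ hf

lemma piM_mem' (r : LinearOrder (Subsp l)) (A : Finset (Subsp l)) (x₀ : Subsp l) {w : Subsp l}
    {f : DFull l} (hf : f ∈ Dsub (A.erase x₀)) : piM r A x₀ w f ∈ Dsub (A.erase x₀) := by
  induction hf using Submodule.span_induction with
  | mem f hfmem =>
      obtain ⟨σ, hσ, rfl⟩ := hfmem
      rw [piM_single]; exact piB_mem' r A x₀ hσ
  | zero => simp
  | add f g _ _ hf hg => rw [map_add]; exact Submodule.add_mem _ hf hg
  | smul c f _ hf => rw [map_smul]; exact Submodule.smul_mem _ _ hf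

lemma hM_mem (r : LinearOrder (Subsp l)) (A : Finset (Subsp l)) (x₀ : Subsp l) {w : Subsp l}
    {f : DFull l} (hf : f ∈ Dsub A) : hM r A x₀ w f ∈ Dsub A := by
  induction hf using Submodule.span_induction with
  | mem f hfmem =>
      obtain ⟨σ, hσ, rfl⟩ := hfmem
      rw [hM_single]; exact hB_mem r A x₀ hσ
  | zero => simp
  | add f g _ _ hf hg => rw [map_add]; exact Submodule.add_mem _ hf hg
  | smul c f _ hf => rw [map_smul]; exact Submodule.smul_mem _ _ hf

lemma hM_zero' (r : LinearOrder (Subsp l)) (A : Finset (Subsp l)) (x₀ : Subsp l) {w : Subsp l}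
    {f : DFull l} (hf : f ∈ Dsub (A.erase x₀)) : hM r A x₀ w f = 0 := by
  induction hf using Submodule.span_induction with
  | mem f hfmem =>
      obtain ⟨σ, hσ, rfl⟩ := hfmem
      rw [hM_single]
      exact hB_zero' r A x₀ fun hc => (Finset.mem_erase.mp (hσ hc)).1 rfl
  | zero => simp
  | add f g _ _ hf hg => rw [map_add, hf, hg, add_zero]
  | smul c f _ hf => rw [map_smul, hf, smul_zero]


/-! #### Quotient-level infrastructure -/

/-- Bridge between the two elaborations of `A.erase x₀` (different `Decidable` instances). -/
lemma erase_classical (r : LinearOrder (Subsp l)) (A : Finset (Subsp l)) (x₀ : Subsp l) :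
    (@Finset.erase (Subsp l) (fun a b => Classical.propDecidable (a = b)) A x₀) = A.erase x₀ := by
  ext a
  simp only [Finset.mem_erase]

/-- Class of an element of `D(A)` in the quotient `D(A)/D(A')`. -/
def mkQD (A : Finset (Subsp l)) (x₀ : Subsp l) (f : DFull l) (hf : f ∈ Dsub A) :
    DQuot A x₀ := quotProj A x₀ ⟨f, hf⟩

lemma mkQD_add (A : Finset (Subsp l)) (x₀ : Subsp l) {f g : DFull l}
    (hf : f ∈ Dsub A) (hg : g ∈ Dsub A) :
    mkQD A x₀ (f + g) (Submodule.add_mem _ hf hg) = mkQD A x₀ f hf + mkQD A x₀ g hg := by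
  rw [mkQD, mkQD, mkQD, ← map_add]; rfl

lemma mkQD_smul (A : Finset (Subsp l)) (x₀ : Subsp l) (c : ℚ) {f : DFull l}
    (hf : f ∈ Dsub A) :
    mkQD A x₀ (c • f) (Submodule.smul_mem _ c hf) = c • mkQD A x₀ f hf := by
  rw [mkQD, mkQD, ← map_smul]; rfl

lemma mkQD_eq_zero (r : LinearOrder (Subsp l)) (A : Finset (Subsp l)) (x₀ : Subsp l)
    {f : DFull l} (hf : f ∈ Dsub A) :
    mkQD A x₀ f hf = 0 ↔ f ∈ Dsub (A.erase x₀) := by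
  rw [mkQD, quotProj, Submodule.mkQ_apply, Submodule.Quotient.mk_eq_zero,
    Submodule.mem_comap, Submodule.subtype_apply, ← erase_classical r]

lemma mkQD_sub (A : Finset (Subsp l)) (x₀ : Subsp l) {f g : DFull l}
    (hf : f ∈ Dsub A) (hg : g ∈ Dsub A) :
    mkQD A x₀ (f - g) (Submodule.sub_mem _ hf hg) = mkQD A x₀ f hf - mkQD A x₀ g hg := by
  rw [mkQD, mkQD, mkQD, ← map_sub]; rfl

lemma mkQD_eq_iff (r : LinearOrder (Subsp l)) (A : Finset (Subsp l)) (x₀ : Subsp l)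
    {f g : DFull l} (hf : f ∈ Dsub A) (hg : g ∈ Dsub A) :
    mkQD A x₀ f hf = mkQD A x₀ g hg ↔ f - g ∈ Dsub (A.erase x₀) := by
  constructor
  · intro h
    refine (mkQD_eq_zero r A x₀ (Submodule.sub_mem _ hf hg)).mp ?_
    rw [mkQD_sub A x₀ hf hg, h, sub_self]
  · intro h
    have h2 := (mkQD_eq_zero r A x₀ (Submodule.sub_mem _ hf hg)).mpr h
    rw [mkQD_sub A x₀ hf hg] at h2
    exact sub_eq_zero.mp h2

lemma mkQD_congr (A : Finset (Subsp l)) (x₀ : Subsp l) {f g : DFull l} (h : f = g)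
    (hf : f ∈ Dsub A) : mkQD A x₀ f hf = mkQD A x₀ g (h ▸ hf) := by
  subst h; rfl

lemma diffQuot_mkQD (r : LinearOrder (Subsp l)) (A : Finset (Subsp l)) (x₀ : Subsp l)
    {f : DFull l} (hf : f ∈ Dsub A) :
    diffQuot r A x₀ (mkQD A x₀ f hf) = mkQD A x₀ (diff r f) (diff_mem r f hf) := by
  rfl

/-- Induction principle for `D(A)/D(A')`. -/
lemma DQuot_induction (A : Finset (Subsp l)) (x₀ : Subsp l) {P : DQuot A x₀ → Prop}
    (x : DQuot A x₀)
    (h0 : P 0)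
    (hs : ∀ (σ : Finset (Subsp l)) (hσ : σ ⊆ A),
      P (mkQD A x₀ (Finsupp.single σ (1 : ℚ)) (single_mem_Dsub hσ)))
    (hsm : ∀ (c : ℚ) (y : DQuot A x₀), P y → P (c • y))
    (hadd : ∀ (y z : DQuot A x₀), P y → P z → P (y + z)) : P x := by
  obtain ⟨⟨f, hf⟩, rfl⟩ := Submodule.mkQ_surjective _ x
  have key : ∀ (hf : f ∈ Dsub A), P (mkQD A x₀ f hf) := by
    induction hf using Submodule.span_induction with
    | mem g hgmem =>
        intro hg
        obtain ⟨σ, hσ, rfl⟩ := hgmem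
        exact hs σ hσ
    | zero =>
        intro h
        have h2 : mkQD A x₀ 0 h = 0 := map_zero (quotProj A x₀)
        rw [h2]; exact h0
    | add g g' hg hg' ih ih' =>
        intro h
        rw [show h = Submodule.add_mem _ hg hg' from rfl, mkQD_add A x₀ hg hg']
        exact hadd _ _ (ih hg) (ih' hg')
    | smul c g hg ih =>
        intro h
        rw [show h = Submodule.smul_mem _ c hg from rfl, mkQD_smul A x₀ c hg]
        exact hsm _ _ (ih hg)
  exact key hf

/-- `Π_w` descends to the quotient. -/
def PiQ (r : LinearOrder (Subsp l)) (A : Finset (Subsp l)) (x₀ w : Subsp l) :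
    DQuot A x₀ →ₗ[ℚ] DQuot A x₀ :=
  Submodule.mapQ _ _ ((piM r A x₀ w).restrict fun f hf => piM_mem r A x₀ hf)
    (by
      intro v hv
      simp only [Submodule.mem_comap, Submodule.subtype_apply,
        LinearMap.restrict_apply] at hv ⊢
      exact piM_mem' r A x₀ hv)

/-- `H_w` descends to the quotient. -/
def HQ (r : LinearOrder (Subsp l)) (A : Finset (Subsp l)) (x₀ w : Subsp l) :
    DQuot A x₀ →ₗ[ℚ] DQuot A x₀ :=
  Submodule.mapQ _ _ ((hM r A x₀ w).restrict fun f hf => hM_mem r A x₀ hf)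
    (by
      intro v hv
      simp only [Submodule.mem_comap, Submodule.subtype_apply,
        LinearMap.restrict_apply] at hv ⊢
      rw [hM_zero' r A x₀ hv]
      exact Submodule.zero_mem _)

lemma PiQ_mkQD (r : LinearOrder (Subsp l)) (A : Finset (Subsp l)) (x₀ w : Subsp l)
    {f : DFull l} (hf : f ∈ Dsub A) :
    PiQ r A x₀ w (mkQD A x₀ f hf) = mkQD A x₀ (piM r A x₀ w f) (piM_mem r A x₀ hf) := by
  rfl

lemma HQ_mkQD (r : LinearOrder (Subsp l)) (A : Finset (Subsp l)) (x₀ w : Subsp l)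
    {f : DFull l} (hf : f ∈ Dsub A) :
    HQ r A x₀ w (mkQD A x₀ f hf) = mkQD A x₀ (hM r A x₀ w f) (hM_mem r A x₀ hf) := by
  rfl


/-! #### Helper lemmas for the homotopy identity -/

section OrderHelpers

variable (r : LinearOrder (Subsp l))

lemma rlt_irrefl (a : Subsp l) : ¬ r.lt a a :=
  @lt_irrefl _ (@PartialOrder.toPreorder _ (@LinearOrder.toPartialOrder _ r)) a

lemma rlt_trans {a b c : Subsp l} (h1 : r.lt a b) (h2 : r.lt b c) : r.lt a c :=
  @lt_trans _ (@PartialOrder.toPreorder _ (@LinearOrder.toPartialOrder _ r)) a b c h1 h2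

lemma rlt_asymm {a b : Subsp l} (h : r.lt a b) : ¬ r.lt b a :=
  @lt_asymm _ (@PartialOrder.toPreorder _ (@LinearOrder.toPartialOrder _ r)) a b h

lemma rlt_of_le_of_ne {a b : Subsp l} (h : r.le a b) (hne : a ≠ b) : r.lt a b :=
  @lt_of_le_of_ne _ (@LinearOrder.toPartialOrder _ r) a b h hne

lemma rle_of_lt {a b : Subsp l} (h : r.lt a b) : r.le a b :=
  @le_of_lt _ (@PartialOrder.toPreorder _ (@LinearOrder.toPartialOrder _ r)) a b h

lemma rlt_trichotomy (a b : Subsp l) : r.lt a b ∨ a = b ∨ r.lt b a :=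
  @lt_trichotomy _ r a b

lemma rle_of_not_lt {a b : Subsp l} (h : ¬ r.lt a b) : r.le b a :=
  (@not_lt _ r a b).mp h

lemma rlt_of_lt_of_le {a b c : Subsp l} (h1 : r.lt a b) (h2 : r.le b c) : r.lt a c :=
  @lt_of_lt_of_le _ (@PartialOrder.toPreorder _ (@LinearOrder.toPartialOrder _ r)) a b c h1 h2

lemma rne_of_lt {a b : Subsp l} (h : r.lt a b) : a ≠ b :=
  fun hc => rlt_irrefl r a (hc ▸ h)

end OrderHelpers

lemma pos_insert_self (r : LinearOrder (Subsp l)) (σ : Finset (Subsp l)) (m : Subsp l) :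
    pos r (insert m σ) m = pos r σ m := by
  unfold pos
  rw [Finset.filter_insert, if_neg (rlt_irrefl r m)]

lemma ite_lt_add_ite_lt (r : LinearOrder (Subsp l)) {y m : Subsp l} (h : y ≠ m) :
    ((if r.lt y m then 1 else 0) + if r.lt m y then 1 else 0 : ℕ) = 1 := by
  rcases rlt_trichotomy r y m with h1 | h1 | h1
  · rw [if_pos h1, if_neg (rlt_asymm r h1)]
  · exact absurd h1 h
  · rw [if_neg (rlt_asymm r h1), if_pos h1]

lemma mem_erase_x0 (r : LinearOrder (Subsp l)) (A : Finset (Subsp l)) (x₀ : Subsp l)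
    {y : Subsp l} (h1 : y ∈ A) (h2 : y ≠ x₀) : y ∈ A.erase x₀ :=
  Finset.mem_erase.mpr ⟨h2, h1⟩

lemma classSet_spec (A : Finset (Subsp l)) (x₀ : Subsp l) {w y : Subsp l}
    (h : y ∈ classSet A x₀ w) : y ∈ A ∧ y ≠ x₀ ∧ x₀ ⊓ y = w := (mem_classSet A x₀).mp h

/-- There is no element of `σ` strictly between `mW w` and `u` when
`σ ∩ C_w = {u}` (uses the goodness of the order). -/
lemma filter_lt_eq (r : LinearOrder (Subsp l)) (A : Finset (Subsp l)) (x₀ : Subsp l)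
    (hord : GoodOrder r A x₀) {w u : Subsp l} {σ : Finset (Subsp l)} (hσ : σ ⊆ A)
    (hx₀σ : x₀ ∈ σ) (hT : σ ∩ classSet A x₀ w = {u}) (hm : mW r A x₀ w ∉ σ) :
    σ.filter (fun z => r.lt z u) = σ.filter (fun z => r.lt z (mW r A x₀ w)) := by
  have hu : u ∈ classSet A x₀ w := by
    have : u ∈ σ ∩ classSet A x₀ w := hT ▸ Finset.mem_singleton_self u
    exact (Finset.mem_inter.mp this).2
  have huσ : u ∈ σ := by
    have : u ∈ σ ∩ classSet A x₀ w := hT ▸ Finset.mem_singleton_self u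
    exact (Finset.mem_inter.mp this).1
  have hCne : (classSet A x₀ w).Nonempty := ⟨u, hu⟩
  set m := mW r A x₀ w with hmdef
  have hmC : m ∈ classSet A x₀ w := mW_mem r A x₀ hCne
  have hmu : m ≠ u := fun hc => hm (hc ▸ huσ)
  have hmltu : r.lt m u := rlt_of_le_of_ne r (mW_le r A x₀ hu) hmu
  have hx₀ltm : r.lt x₀ m :=
    hord.1 m (mem_erase_x0 r A x₀ (classSet_spec A x₀ hmC).1 (classSet_spec A x₀ hmC).2.1)
  ext z
  simp only [Finset.mem_filter, and_congr_right_iff]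
  intro hz
  constructor
  · intro hzu
    by_contra hzm
    have hmz : r.le m z := rle_of_not_lt r hzm
    -- z is strictly between m and u, hence in the class of w, contradiction
    have hzx₀ : z ≠ x₀ := by
      intro hc
      exact rlt_irrefl r x₀ (rlt_of_lt_of_le r hx₀ltm (hc ▸ hmz))
    have hzA' : z ∈ A.erase x₀ := mem_erase_x0 r A x₀ (hσ hz) hzx₀
    have hmA' : m ∈ A.erase x₀ :=
      mem_erase_x0 r A x₀ (classSet_spec A x₀ hmC).1 (classSet_spec A x₀ hmC).2.1
    have huA' : u ∈ A.erase x₀ :=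
      mem_erase_x0 r A x₀ (classSet_spec A x₀ hu).1 (classSet_spec A x₀ hu).2.1
    have hkey := hord.2.1 m hmA' z hzA' u huA' hmz (rle_of_lt r hzu)
      ((classSet_spec A x₀ hmC).2.2.trans (classSet_spec A x₀ hu).2.2.symm)
    -- so z is in the class of w
    have hzC : z ∈ classSet A x₀ w := (mem_classSet A x₀).mpr
      ⟨hσ hz, hzx₀, hkey ▸ (classSet_spec A x₀ hmC).2.2⟩
    have : z ∈ σ ∩ classSet A x₀ w := Finset.mem_inter.mpr ⟨hz, hzC⟩
    rw [hT, Finset.mem_singleton] at this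
    exact rlt_irrefl r u (this ▸ hzu)
  · intro hzm
    exact rlt_trans r hzm hmltu


/-! #### Unfolding lemmas for `piB` and `hB` -/

lemma piB_of_two (r : LinearOrder (Subsp l)) (A : Finset (Subsp l)) (x₀ w : Subsp l)
    {σ : Finset (Subsp l)} (h : 2 ≤ (σ ∩ classSet A x₀ w).card) :
    piB r A x₀ w σ = 0 := by
  unfold piB; rw [if_pos h]

lemma piB_of_one (r : LinearOrder (Subsp l)) (A : Finset (Subsp l)) (x₀ w : Subsp l)
    {σ : Finset (Subsp l)} (h : (σ ∩ classSet A x₀ w).card = 1) :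
    piB r A x₀ w σ =
      Finsupp.single (insert (mW r A x₀ w) (σ \ classSet A x₀ w)) (1 : ℚ) := by
  unfold piB; rw [if_neg (by omega), if_pos h]

lemma piB_of_zero (r : LinearOrder (Subsp l)) (A : Finset (Subsp l)) (x₀ w : Subsp l)
    {σ : Finset (Subsp l)} (h : σ ∩ classSet A x₀ w = ∅) :
    piB r A x₀ w σ = Finsupp.single σ (1 : ℚ) := by
  unfold piB
  rw [if_neg (by rw [h]; simp), if_neg (by rw [h]; simp)]

lemma hB_of_guard (r : LinearOrder (Subsp l)) (A : Finset (Subsp l)) (x₀ w : Subsp l)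
    {σ : Finset (Subsp l)} (h1 : x₀ ∈ σ) (h2 : (σ ∩ classSet A x₀ w).Nonempty)
    (h3 : mW r A x₀ w ∉ σ) :
    hB r A x₀ w σ = ((-1 : ℚ) ^ pos r (insert (mW r A x₀ w) σ) (mW r A x₀ w)) •
      Finsupp.single (insert (mW r A x₀ w) σ) (1 : ℚ) := by
  unfold hB; rw [if_pos ⟨h1, h2, h3⟩]

lemma hB_of_mem (r : LinearOrder (Subsp l)) (A : Finset (Subsp l)) (x₀ w : Subsp l)
    {σ : Finset (Subsp l)} (h3 : mW r A x₀ w ∈ σ) :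
    hB r A x₀ w σ = 0 := by
  unfold hB; rw [if_neg (fun hc => hc.2.2 h3)]

lemma hB_of_empty (r : LinearOrder (Subsp l)) (A : Finset (Subsp l)) (x₀ w : Subsp l)
    {σ : Finset (Subsp l)} (h : ¬ (σ ∩ classSet A x₀ w).Nonempty) :
    hB r A x₀ w σ = 0 := by
  unfold hB; rw [if_neg (fun hc => h hc.2.1)]

lemma erase_eq_sdiff (r : LinearOrder (Subsp l)) (A : Finset (Subsp l)) (x₀ w : Subsp l)
    {σ : Finset (Subsp l)} {u : Subsp l} (hT : σ ∩ classSet A x₀ w = {u}) :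
    σ.erase u = σ \ classSet A x₀ w := by
  have huT : u ∈ σ ∩ classSet A x₀ w := hT ▸ Finset.mem_singleton_self u
  ext a
  simp only [Finset.mem_erase, Finset.mem_sdiff]
  constructor
  · rintro ⟨hne, ha⟩
    refine ⟨ha, fun hC => hne ?_⟩
    have : a ∈ σ ∩ classSet A x₀ w := Finset.mem_inter.mpr ⟨ha, hC⟩
    rw [hT, Finset.mem_singleton] at this; exact this
  · rintro ⟨ha, hC⟩
    exact ⟨fun hc => hC (hc ▸ (Finset.mem_inter.mp huT).2), ha⟩

lemma hM_dBasis (r : LinearOrder (Subsp l)) (A : Finset (Subsp l)) (x₀ w : Subsp l)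
    (σ : Finset (Subsp l)) :
    hM r A x₀ w (dBasis r σ) =
      ∑ y ∈ σ.filter (fun y => inter (σ.erase y) = inter σ),
        ((-1 : ℚ) ^ pos r σ y) • hB r A x₀ w (σ.erase y) := by
  rw [dBasis, map_sum]
  refine Finset.sum_congr rfl fun y hy => ?_
  rw [map_smul, hM_single]

/-! #### The homotopy identity -/

lemma key_homotopy (r : LinearOrder (Subsp l)) (A : Finset (Subsp l)) (x₀ : Subsp l)
    (hord : GoodOrder r A x₀) (w : Subsp l) {σ : Finset (Subsp l)}
    (hσ : σ ⊆ A) (hx₀σ : x₀ ∈ σ) :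
    diff r (hB r A x₀ w σ) + hM r A x₀ w (dBasis r σ) + piB r A x₀ w σ
      - Finsupp.single σ (1 : ℚ) ∈ Dsub (A.erase x₀) := by
  by_cases hTne : (σ ∩ classSet A x₀ w).Nonempty
  · by_cases hmσ : mW r A x₀ w ∈ σ
    · -- Case 2 : the minimal class element belongs to σ
      have hTCne : (classSet A x₀ w).Nonempty := classSet_nonempty_of_inter r hTne
      have hmC : mW r A x₀ w ∈ classSet A x₀ w := mW_mem r A x₀ hTCne
      have hmT : mW r A x₀ w ∈ σ ∩ classSet A x₀ w := Finset.mem_inter.mpr ⟨hmσ, hmC⟩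
      have hmx₀ : mW r A x₀ w ≠ x₀ := (classSet_spec A x₀ hmC).2.1
      by_cases hT1 : σ ∩ classSet A x₀ w = {mW r A x₀ w}
      · -- Case 2a : T = {m}
        have hpi : piB r A x₀ w σ = Finsupp.single σ (1 : ℚ) := by
          rw [piB_of_one r A x₀ w (by rw [hT1]; simp), ← erase_eq_sdiff r A x₀ w hT1,
            Finset.insert_erase hmσ]
        have hhB : hB r A x₀ w σ = 0 := hB_of_mem r A x₀ w hmσ
        have hhM : hM r A x₀ w (dBasis r σ) = 0 := by
          rw [hM_dBasis]
          refine Finset.sum_eq_zero fun y hy => ?_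
          by_cases hym : y = mW r A x₀ w
          · subst hym
            have h0 : hB r A x₀ w (σ.erase (mW r A x₀ w)) = 0 := by
              refine hB_of_empty r A x₀ w ?_
              rintro ⟨a, ha⟩
              have h1 : a ∈ σ ∩ classSet A x₀ w := Finset.mem_inter.mpr
                ⟨Finset.mem_of_mem_erase (Finset.mem_inter.mp ha).1, (Finset.mem_inter.mp ha).2⟩
              rw [hT1, Finset.mem_singleton] at h1
              exact (Finset.mem_erase.mp (Finset.mem_inter.mp ha).1).1 h1
            rw [h0, smul_zero]
          · rw [hB_of_mem r A x₀ w (Finset.mem_erase.mpr ⟨Ne.symm hym, hmσ⟩), smul_zero]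
        rw [hhB, hhM, hpi, map_zero]
        have hfin : (0 : DFull l) + 0 + Finsupp.single σ (1 : ℚ) - Finsupp.single σ (1 : ℚ)
            = 0 := by abel
        rw [hfin]
        exact Submodule.zero_mem _
      · -- Case 2b : m ∈ T, |T| ≥ 2
        obtain ⟨z, hzT, hzm⟩ : ∃ z ∈ σ ∩ classSet A x₀ w, z ≠ mW r A x₀ w := by
          by_contra hc
          push_neg at hc
          exact hT1 (Finset.eq_singleton_iff_unique_mem.mpr ⟨hmT, fun a ha => hc a ha⟩)
        have hzσ := (Finset.mem_inter.mp hzT).1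
        have hzC := (Finset.mem_inter.mp hzT).2
        have hcard : 2 ≤ (σ ∩ classSet A x₀ w).card :=
          Finset.one_lt_card.mpr ⟨z, hzT, mW r A x₀ w, hmT, hzm⟩
        have hpi : piB r A x₀ w σ = 0 := piB_of_two r A x₀ w hcard
        have hhB : hB r A x₀ w σ = 0 := hB_of_mem r A x₀ w hmσ
        have hhM : hM r A x₀ w (dBasis r σ) = Finsupp.single σ (1 : ℚ) := by
          rw [hM_dBasis]
          have hmem : mW r A x₀ w ∈ σ.filter (fun y => inter (σ.erase y) = inter σ) := by
            refine Finset.mem_filter.mpr ⟨hmσ, ?_⟩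
            exact inter_erase_classmate r hx₀σ hzσ hmσ hzm (Ne.symm hmx₀)
              ((classSet_spec A x₀ hzC).2.2.trans (classSet_spec A x₀ hmC).2.2.symm)
          have hzero : ∀ y ∈ σ.filter (fun y => inter (σ.erase y) = inter σ),
              y ≠ mW r A x₀ w →
              ((-1 : ℚ) ^ pos r σ y) • hB r A x₀ w (σ.erase y) = 0 := by
            intro y hy hym
            rw [hB_of_mem r A x₀ w (Finset.mem_erase.mpr ⟨Ne.symm hym, hmσ⟩), smul_zero]
          rw [Finset.sum_eq_single_of_mem (mW r A x₀ w) hmem hzero]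
          rw [hB_of_guard r A x₀ w (Finset.mem_erase.mpr ⟨Ne.symm hmx₀, hx₀σ⟩)
              ⟨z, Finset.mem_inter.mpr ⟨Finset.mem_erase.mpr ⟨hzm, hzσ⟩, hzC⟩⟩
              (Finset.notMem_erase _ _), Finset.insert_erase hmσ, smul_smul,
              ← pow_add, ← two_mul, pow_mul, neg_one_sq, one_pow, one_smul]
        rw [hhB, hhM, hpi, map_zero]
        have hfin : (0 : DFull l) + Finsupp.single σ (1 : ℚ) + 0 - Finsupp.single σ (1 : ℚ)
            = 0 := by abel
        rw [hfin]
        exact Submodule.zero_mem _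
    · -- Case 3 : T nonempty, m ∉ σ  (the main case)
      obtain ⟨u0, hu0T⟩ := hTne
      have hu0σ : u0 ∈ σ := (Finset.mem_inter.mp hu0T).1
      have hu0C : u0 ∈ classSet A x₀ w := (Finset.mem_inter.mp hu0T).2
      have hTCne : (classSet A x₀ w).Nonempty := ⟨u0, hu0C⟩
      have hmC : mW r A x₀ w ∈ classSet A x₀ w := mW_mem r A x₀ hTCne
      have hmx₀ : mW r A x₀ w ≠ x₀ := (classSet_spec A x₀ hmC).2.1
      have hmw : x₀ ⊓ mW r A x₀ w = w := (classSet_spec A x₀ hmC).2.2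
      have hclm : x₀ ⊓ u0 = x₀ ⊓ mW r A x₀ w :=
        (classSet_spec A x₀ hu0C).2.2.trans hmw.symm
      have hinterρ : inter (insert (mW r A x₀ w) σ) = inter σ :=
        inter_insert_classmate r hx₀σ hu0σ hclm
      -- Step 1 : expand the differential of `hB σ`
      have hdiff : diff r (hB r A x₀ w σ) = Finsupp.single σ (1 : ℚ) +
          ∑ y ∈ σ, ((-1 : ℚ) ^ pos r (insert (mW r A x₀ w) σ) (mW r A x₀ w)) •
            (if inter ((insert (mW r A x₀ w) σ).erase y) = inter (insert (mW r A x₀ w) σ)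
              then ((-1 : ℚ) ^ pos r (insert (mW r A x₀ w) σ) y) •
                Finsupp.single ((insert (mW r A x₀ w) σ).erase y) (1 : ℚ) else 0) := by
        rw [hB_of_guard r A x₀ w hx₀σ ⟨u0, hu0T⟩ hmσ, map_smul, diff_apply_single]
        show ((-1 : ℚ) ^ pos r (insert (mW r A x₀ w) σ) (mW r A x₀ w)) •
          dBasis r (insert (mW r A x₀ w) σ) = _
        rw [dBasis, Finset.sum_filter, Finset.smul_sum, Finset.sum_insert hmσ]
        congr 1
        have hcondm : inter ((insert (mW r A x₀ w) σ).erase (mW r A x₀ w)) =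
            inter (insert (mW r A x₀ w) σ) := by
          rw [Finset.erase_insert hmσ, hinterρ]
        rw [if_pos hcondm, Finset.erase_insert hmσ, smul_smul, ← pow_add, ← two_mul,
          pow_mul, neg_one_sq, one_pow, one_smul]
      -- Step 2 : expand `hM (dBasis σ)`
      have hhM : hM r A x₀ w (dBasis r σ) =
          ∑ y ∈ σ, (if inter (σ.erase y) = inter σ
            then ((-1 : ℚ) ^ pos r σ y) • hB r A x₀ w (σ.erase y) else 0) := by
        rw [hM_dBasis, Finset.sum_filter]
      -- Step 3 : the pointwise cancellation for `y ∈ σ.erase x₀`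
      have key : ∀ y ∈ σ.erase x₀,
          (((-1 : ℚ) ^ pos r (insert (mW r A x₀ w) σ) (mW r A x₀ w)) •
            (if inter ((insert (mW r A x₀ w) σ).erase y) = inter (insert (mW r A x₀ w) σ)
              then ((-1 : ℚ) ^ pos r (insert (mW r A x₀ w) σ) y) •
                Finsupp.single ((insert (mW r A x₀ w) σ).erase y) (1 : ℚ) else 0)) +
          (if inter (σ.erase y) = inter σ
            then ((-1 : ℚ) ^ pos r σ y) • hB r A x₀ w (σ.erase y) else 0) =
          (if σ ∩ classSet A x₀ w = {y} then -(piB r A x₀ w σ) else 0) := by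
        intro y hy
        have hyx₀ : y ≠ x₀ := (Finset.mem_erase.mp hy).1
        have hyσ : y ∈ σ := (Finset.mem_erase.mp hy).2
        have hym : y ≠ mW r A x₀ w := fun hc => hmσ (hc ▸ hyσ)
        have heraseρ : (insert (mW r A x₀ w) σ).erase y =
            insert (mW r A x₀ w) (σ.erase y) :=
          Finset.erase_insert_of_ne (Ne.symm hym)
        by_cases hTy : σ ∩ classSet A x₀ w = {y}
        · -- the special element: `T = {y}`
          rw [if_pos hTy]
          have hyC : y ∈ classSet A x₀ w :=
            (Finset.mem_inter.mp (hTy ▸ Finset.mem_singleton_self y)).2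
          have hyw : x₀ ⊓ y = w := (classSet_spec A x₀ hyC).2.2
          -- the `hM`-side term vanishes
          have h0 : hB r A x₀ w (σ.erase y) = 0 := by
            refine hB_of_empty r A x₀ w ?_
            rintro ⟨a, ha⟩
            have h1 : a ∈ σ ∩ classSet A x₀ w := Finset.mem_inter.mpr
              ⟨Finset.mem_of_mem_erase (Finset.mem_inter.mp ha).1, (Finset.mem_inter.mp ha).2⟩
            rw [hTy, Finset.mem_singleton] at h1
            exact (Finset.mem_erase.mp (Finset.mem_inter.mp ha).1).1 h1
          have hH0 : (if inter (σ.erase y) = inter σ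
              then ((-1 : ℚ) ^ pos r σ y) • hB r A x₀ w (σ.erase y) else 0) = 0 := by
            rw [h0]; split <;> simp
          rw [hH0, add_zero]
          -- the `diff`-side condition holds
          have hcond : inter ((insert (mW r A x₀ w) σ).erase y) =
              inter (insert (mW r A x₀ w) σ) := by
            refine inter_erase_classmate r (Finset.mem_insert_of_mem hx₀σ)
              (Finset.mem_insert_self _ _) (Finset.mem_insert_of_mem hyσ)
              (Ne.symm hym) (Ne.symm hyx₀) (hmw.trans hyw.symm)
          rw [if_pos hcond, smul_smul]
          -- identify the two finsets
          have hset : (insert (mW r A x₀ w) σ).erase y =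
              insert (mW r A x₀ w) (σ \ classSet A x₀ w) := by
            rw [heraseρ, erase_eq_sdiff r A x₀ w hTy]
          -- sign computation
          have hPy : pos r σ y = pos r σ (mW r A x₀ w) := by
            unfold pos
            rw [filter_lt_eq r A x₀ hord hσ hx₀σ hTy hmσ]
          have hmlty : r.lt (mW r A x₀ w) y :=
            rlt_of_le_of_ne r (mW_le r A x₀ hyC) (Ne.symm hym)
          have hposρ : pos r (insert (mW r A x₀ w) σ) y = pos r σ y + 1 := by
            rw [pos_insert r hmσ hym, if_pos hmlty]
          have hcoef : ((-1 : ℚ) ^ pos r (insert (mW r A x₀ w) σ) (mW r A x₀ w)) *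
              ((-1 : ℚ) ^ pos r (insert (mW r A x₀ w) σ) y) = -1 := by
            rw [pos_insert_self r σ (mW r A x₀ w), hposρ, hPy, ← pow_add]
            have harith : pos r σ (mW r A x₀ w) + (pos r σ (mW r A x₀ w) + 1) =
                2 * pos r σ (mW r A x₀ w) + 1 := by omega
            rw [harith, pow_succ, pow_mul, neg_one_sq, one_pow, one_mul]
          rw [hcoef, hset, piB_of_one r A x₀ w (by rw [hTy]; simp), neg_one_smul]
        · -- the generic element: `T ≠ {y}`
          rw [if_neg hTy]
          -- produce a classmate different from `y`
          have hz : ∃ z, z ∈ (σ.erase y) ∩ classSet A x₀ w := by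
            by_cases hyC : y ∈ classSet A x₀ w
            · have hyT : y ∈ σ ∩ classSet A x₀ w := Finset.mem_inter.mpr ⟨hyσ, hyC⟩
              obtain ⟨z, hzT, hzy⟩ : ∃ z ∈ σ ∩ classSet A x₀ w, z ≠ y := by
                by_contra hc
                push_neg at hc
                exact hTy (Finset.eq_singleton_iff_unique_mem.mpr ⟨hyT, fun a ha => hc a ha⟩)
              exact ⟨z, Finset.mem_inter.mpr ⟨Finset.mem_erase.mpr
                ⟨hzy, (Finset.mem_inter.mp hzT).1⟩, (Finset.mem_inter.mp hzT).2⟩⟩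
            · refine ⟨u0, Finset.mem_inter.mpr ⟨Finset.mem_erase.mpr ⟨?_, hu0σ⟩, hu0C⟩⟩
              exact fun hc => hyC (hc ▸ hu0C)
          obtain ⟨z, hzm⟩ := hz
          have hzey : z ∈ σ.erase y := (Finset.mem_inter.mp hzm).1
          have hzC : z ∈ classSet A x₀ w := (Finset.mem_inter.mp hzm).2
          have hx₀ey : x₀ ∈ σ.erase y := Finset.mem_erase.mpr ⟨Ne.symm hyx₀, hx₀σ⟩
          have hclz : x₀ ⊓ z = x₀ ⊓ mW r A x₀ w :=
            (classSet_spec A x₀ hzC).2.2.trans hmw.symm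
          have hinterey : inter (insert (mW r A x₀ w) (σ.erase y)) = inter (σ.erase y) :=
            inter_insert_classmate r hx₀ey hzey hclz
          -- the two conditions are equivalent
          have hcondiff : (inter ((insert (mW r A x₀ w) σ).erase y) =
              inter (insert (mW r A x₀ w) σ)) ↔ (inter (σ.erase y) = inter σ) := by
            rw [heraseρ, hinterey, hinterρ]
          by_cases hcnd : inter (σ.erase y) = inter σ
          · rw [if_pos (hcondiff.mpr hcnd), if_pos hcnd]
            have hmey : mW r A x₀ w ∉ σ.erase y := fun hc => hmσ (Finset.mem_of_mem_erase hc)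
            rw [hB_of_guard r A x₀ w hx₀ey ⟨z, hzm⟩ hmey]
            rw [heraseρ, smul_smul, smul_smul, ← add_smul]
            convert zero_smul ℚ _
            -- sign bookkeeping
            have h1 : pos r (insert (mW r A x₀ w) σ) y =
                pos r σ y + (if r.lt (mW r A x₀ w) y then 1 else 0) :=
              pos_insert r hmσ hym
            have h2 : pos r (insert (mW r A x₀ w) σ) (mW r A x₀ w) =
                pos r ((insert (mW r A x₀ w) σ).erase y) (mW r A x₀ w) +
                  (if r.lt y (mW r A x₀ w) then 1 else 0) :=
              pos_erase r (Finset.mem_insert_of_mem hyσ) (Ne.symm hym)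
            rw [heraseρ] at h2
            rw [h1, h2, ← pow_add, ← pow_add]
            have h3 := ite_lt_add_ite_lt r hym
            have h4 : pos r (insert (mW r A x₀ w) (σ.erase y)) (mW r A x₀ w) +
                (if r.lt y (mW r A x₀ w) then 1 else 0) +
                (pos r σ y + (if r.lt (mW r A x₀ w) y then 1 else 0)) =
                (pos r σ y + pos r (insert (mW r A x₀ w) (σ.erase y)) (mW r A x₀ w)) + 1 := by
              omega
            rw [h4, pow_succ, pow_add]
            ring
          · rw [if_neg (fun hc => hcnd (hcondiff.mp hc)), if_neg hcnd, smul_zero, add_zero]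
      -- Step 4 : assemble
      rw [hdiff, hhM]
      have hswap : Finsupp.single σ (1 : ℚ) +
          (∑ y ∈ σ, ((-1 : ℚ) ^ pos r (insert (mW r A x₀ w) σ) (mW r A x₀ w)) •
            (if inter ((insert (mW r A x₀ w) σ).erase y) = inter (insert (mW r A x₀ w) σ)
              then ((-1 : ℚ) ^ pos r (insert (mW r A x₀ w) σ) y) •
                Finsupp.single ((insert (mW r A x₀ w) σ).erase y) (1 : ℚ) else 0)) +
          (∑ y ∈ σ, (if inter (σ.erase y) = inter σ
            then ((-1 : ℚ) ^ pos r σ y) • hB r A x₀ w (σ.erase y) else 0)) +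
          piB r A x₀ w σ - Finsupp.single σ (1 : ℚ) =
          (∑ y ∈ σ, (((-1 : ℚ) ^ pos r (insert (mW r A x₀ w) σ) (mW r A x₀ w)) •
            (if inter ((insert (mW r A x₀ w) σ).erase y) = inter (insert (mW r A x₀ w) σ)
              then ((-1 : ℚ) ^ pos r (insert (mW r A x₀ w) σ) y) •
                Finsupp.single ((insert (mW r A x₀ w) σ).erase y) (1 : ℚ) else 0) +
            (if inter (σ.erase y) = inter σ
              then ((-1 : ℚ) ^ pos r σ y) • hB r A x₀ w (σ.erase y) else 0))) +
          piB r A x₀ w σ := by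
        rw [Finset.sum_add_distrib]
        abel
      rw [hswap, ← Finset.add_sum_erase _ _ hx₀σ]
      -- the sum over `σ.erase x₀`
      have hsum : (∑ y ∈ σ.erase x₀,
          (((-1 : ℚ) ^ pos r (insert (mW r A x₀ w) σ) (mW r A x₀ w)) •
            (if inter ((insert (mW r A x₀ w) σ).erase y) = inter (insert (mW r A x₀ w) σ)
              then ((-1 : ℚ) ^ pos r (insert (mW r A x₀ w) σ) y) •
                Finsupp.single ((insert (mW r A x₀ w) σ).erase y) (1 : ℚ) else 0) +
            (if inter (σ.erase y) = inter σ
              then ((-1 : ℚ) ^ pos r σ y) • hB r A x₀ w (σ.erase y) else 0))) =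
          -(piB r A x₀ w σ) := by
        rw [Finset.sum_congr rfl key]
        by_cases hc1 : (σ ∩ classSet A x₀ w).card = 1
        · obtain ⟨u, hu⟩ := Finset.card_eq_one.mp hc1
          have huσ : u ∈ σ := (Finset.mem_inter.mp (hu ▸ Finset.mem_singleton_self u)).1
          have huC : u ∈ classSet A x₀ w :=
            (Finset.mem_inter.mp (hu ▸ Finset.mem_singleton_self u)).2
          have hux₀ : u ≠ x₀ := (classSet_spec A x₀ huC).2.1
          rw [Finset.sum_eq_single_of_mem u (Finset.mem_erase.mpr ⟨hux₀, huσ⟩)]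
          · rw [if_pos hu]
          · intro b hb hbu
            rw [if_neg]
            intro hcb
            exact hbu (Finset.singleton_injective (hcb.symm.trans hu))
        · have hcge : 2 ≤ (σ ∩ classSet A x₀ w).card := by
            have h0 : (σ ∩ classSet A x₀ w).card ≠ 0 := by
              intro hc
              exact Finset.Nonempty.ne_empty ⟨u0, hu0T⟩ (Finset.card_eq_zero.mp hc)
            omega
          rw [piB_of_two r A x₀ w hcge, neg_zero]
          refine Finset.sum_eq_zero fun y hy => ?_
          rw [if_neg]
          intro hcb
          rw [hcb, Finset.card_singleton] at hc1
          exact hc1 rfl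
      rw [hsum]
      -- the remaining term is the `x₀`-term, which lies in `D(A')`
      have hx₀H : (if inter (σ.erase x₀) = inter σ
          then ((-1 : ℚ) ^ pos r σ x₀) • hB r A x₀ w (σ.erase x₀) else 0) = 0 := by
        rw [hB_zero' r A x₀ (Finset.notMem_erase x₀ σ)]
        split <;> simp
      rw [hx₀H, add_zero, neg_add_cancel_right]
      -- the `x₀`-term of the `diff` sum lies in `D(A')`
      split
      · refine Submodule.smul_mem _ _ (Submodule.smul_mem _ _ (single_mem_Dsub ?_))
        intro a ha
        have hax₀ : a ≠ x₀ := (Finset.mem_erase.mp ha).1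
        rcases Finset.mem_insert.mp (Finset.mem_of_mem_erase ha) with h | h
        · subst h
          exact Finset.mem_erase.mpr ⟨hmx₀, (classSet_spec A x₀ hmC).1⟩
        · exact Finset.mem_erase.mpr ⟨hax₀, hσ h⟩
      · rw [smul_zero]
        exact Submodule.zero_mem _
  · -- Case 1 : T = ∅
    have hT0 : σ ∩ classSet A x₀ w = ∅ := Finset.not_nonempty_iff_eq_empty.mp hTne
    have hpi : piB r A x₀ w σ = Finsupp.single σ (1 : ℚ) := piB_of_zero r A x₀ w hT0
    have hhB : hB r A x₀ w σ = 0 := hB_of_empty r A x₀ w hTne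
    have hhM : hM r A x₀ w (dBasis r σ) = 0 := by
      rw [hM_dBasis]
      refine Finset.sum_eq_zero fun y hy => ?_
      have h0 : hB r A x₀ w (σ.erase y) = 0 := by
        refine hB_of_empty r A x₀ w ?_
        rintro ⟨a, ha⟩
        have h1 : a ∈ σ ∩ classSet A x₀ w := Finset.mem_inter.mpr
          ⟨Finset.mem_of_mem_erase (Finset.mem_inter.mp ha).1, (Finset.mem_inter.mp ha).2⟩
        rw [hT0] at h1
        exact absurd h1 (Finset.notMem_empty a)
      rw [h0, smul_zero]
    rw [hhB, hhM, hpi, map_zero]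
    have hfin : (0 : DFull l) + 0 + Finsupp.single σ (1 : ℚ) - Finsupp.single σ (1 : ℚ)
        = 0 := by abel
    rw [hfin]
    exact Submodule.zero_mem _


/-! #### `d ∘ d = 0` -/

lemma erase_erase_comm (r : LinearOrder (Subsp l)) (σ : Finset (Subsp l)) (a b : Subsp l) :
    (σ.erase a).erase b = (σ.erase b).erase a := by
  ext c
  simp only [Finset.mem_erase]
  tauto

lemma inter_mono (r : LinearOrder (Subsp l)) {σ τ : Finset (Subsp l)} (h : σ ⊆ τ) :
    inter τ ≤ inter σ := Finset.inf_mono h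

lemma diff_dBasis (r : LinearOrder (Subsp l)) (σ : Finset (Subsp l)) :
    diff r (dBasis r σ) = 0 := by
  rw [dBasis, map_sum]
  have h1 : ∀ y ∈ σ.filter (fun y => inter (σ.erase y) = inter σ),
      diff r (((-1 : ℚ) ^ pos r σ y) • Finsupp.single (σ.erase y) (1 : ℚ))
      = ∑ x ∈ (σ.erase y).filter
          (fun x => inter ((σ.erase y).erase x) = inter (σ.erase y)),
          (((-1 : ℚ) ^ pos r σ y) * ((-1 : ℚ) ^ pos r (σ.erase y) x)) •
            Finsupp.single ((σ.erase y).erase x) (1 : ℚ) := by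
    intro y hy
    rw [map_smul, diff_apply_single, dBasis, Finset.smul_sum]
    refine Finset.sum_congr rfl fun x hx => ?_
    rw [smul_smul]
  rw [Finset.sum_congr rfl h1, Finset.sum_sigma']
  refine Finset.sum_involution (fun p hp => ⟨p.2, p.1⟩) ?_ ?_ ?_ ?_
  · -- the two terms of a pair cancel
    intro p hp
    rw [Finset.mem_sigma, Finset.mem_filter, Finset.mem_filter] at hp
    obtain ⟨⟨hyσ, hcy⟩, hxe, hcx⟩ := hp
    have hxσ : p.2 ∈ σ := Finset.mem_of_mem_erase hxe
    have hxy : p.2 ≠ p.1 := (Finset.mem_erase.mp hxe).1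
    have hee : (σ.erase p.1).erase p.2 = (σ.erase p.2).erase p.1 :=
      erase_erase_comm r σ p.1 p.2
    show (((-1 : ℚ) ^ pos r σ p.1) * ((-1 : ℚ) ^ pos r (σ.erase p.1) p.2)) •
        Finsupp.single ((σ.erase p.1).erase p.2) (1 : ℚ) +
      (((-1 : ℚ) ^ pos r σ p.2) * ((-1 : ℚ) ^ pos r (σ.erase p.2) p.1)) •
        Finsupp.single ((σ.erase p.2).erase p.1) (1 : ℚ) = 0
    rw [← hee, ← add_smul]
    have e1 : pos r σ p.2 = pos r (σ.erase p.1) p.2 + (if r.lt p.1 p.2 then 1 else 0) :=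
      pos_erase r hyσ hxy
    have e2 : pos r σ p.1 = pos r (σ.erase p.2) p.1 + (if r.lt p.2 p.1 then 1 else 0) :=
      pos_erase r hxσ (Ne.symm hxy)
    have hgoal : (((-1 : ℚ) ^ pos r σ p.1) * ((-1 : ℚ) ^ pos r (σ.erase p.1) p.2)) +
        (((-1 : ℚ) ^ pos r σ p.2) * ((-1 : ℚ) ^ pos r (σ.erase p.2) p.1)) = 0 := by
      rw [e1, e2]
      rcases rlt_trichotomy r p.1 p.2 with h | h | h
      · rw [if_pos h, if_neg (rlt_asymm r h), add_zero, pow_succ]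
        ring
      · exact absurd h.symm hxy
      · rw [if_neg (rlt_asymm r h), if_pos h, add_zero, pow_succ]
        ring
    rw [hgoal, zero_smul]
  · -- nondegeneracy of the involution
    intro p hp _
    rw [Finset.mem_sigma, Finset.mem_filter, Finset.mem_filter] at hp
    intro hc
    have : p.1 = p.2 := congrArg Sigma.fst hc.symm
    exact (Finset.mem_erase.mp hp.2.1).1 this.symm
  · -- the involution stays in the index set
    intro p hp
    rw [Finset.mem_sigma, Finset.mem_filter, Finset.mem_filter] at hp ⊢
    obtain ⟨⟨hyσ, hcy⟩, hxe, hcx⟩ := hp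
    have hxσ : p.2 ∈ σ := Finset.mem_of_mem_erase hxe
    have hxy : p.2 ≠ p.1 := (Finset.mem_erase.mp hxe).1
    have hee : (σ.erase p.1).erase p.2 = (σ.erase p.2).erase p.1 :=
      erase_erase_comm r σ p.1 p.2
    have hkey : inter (σ.erase p.2) = inter σ := by
      refine le_antisymm ?_ (inter_mono r (Finset.erase_subset _ _))
      calc inter (σ.erase p.2) ≤ inter ((σ.erase p.2).erase p.1) := by
            exact inter_mono r (Finset.erase_subset _ _)
        _ = inter σ := by rw [← hee, hcx, hcy]
    refine ⟨⟨hxσ, hkey⟩, Finset.mem_erase.mpr ⟨Ne.symm hxy, hyσ⟩, ?_⟩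
    rw [← hee, hcx, hcy, hkey]
  · intro p hp
    rfl

lemma diff_diff (r : LinearOrder (Subsp l)) (f : DFull l) : diff r (diff r f) = 0 := by
  have h : ((diff r).comp (diff r)) = (0 : DFull l →ₗ[ℚ] DFull l) := by
    refine Finsupp.lhom_ext fun σ c => ?_
    have hc : Finsupp.single σ c = c • Finsupp.single σ (1 : ℚ) := by
      rw [Finsupp.smul_single, smul_eq_mul, mul_one]
    rw [LinearMap.comp_apply, hc, map_smul, map_smul, diff_apply_single, diff_dBasis,
      smul_zero, LinearMap.zero_apply]
  exact DFunLike.congr_fun h f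

lemma dBasis_mem (r : LinearOrder (Subsp l)) (A : Finset (Subsp l)) {σ : Finset (Subsp l)}
    (hσ : σ ⊆ A) : dBasis r σ ∈ Dsub A := by
  have := diff_mem r (Finsupp.single σ (1 : ℚ)) (single_mem_Dsub hσ)
  rwa [diff_apply_single] at this

/-! #### Quotient-level identities -/

lemma diffQuot_sq (r : LinearOrder (Subsp l)) (A : Finset (Subsp l)) (x₀ : Subsp l)
    (x : DQuot A x₀) : diffQuot r A x₀ (diffQuot r A x₀ x) = 0 := by
  obtain ⟨⟨f, hf⟩, rfl⟩ := Submodule.mkQ_surjective _ x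
  show diffQuot r A x₀ (diffQuot r A x₀ (mkQD A x₀ f hf)) = 0
  rw [diffQuot_mkQD, diffQuot_mkQD]
  have h3 : mkQD A x₀ (diff r (diff r f)) (diff_mem r _ (diff_mem r f hf)) =
      mkQD A x₀ 0 (Submodule.zero_mem _) := mkQD_congr A x₀ (diff_diff r f) _
  rw [h3]
  exact map_zero (quotProj A x₀)

/-- Pointwise homotopy identity in the quotient complex. -/
lemma homotopy_Q (r : LinearOrder (Subsp l)) (A : Finset (Subsp l)) (x₀ : Subsp l)
    (hord : GoodOrder r A x₀) (w : Subsp l) (x : DQuot A x₀) :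
    diffQuot r A x₀ (HQ r A x₀ w x) + HQ r A x₀ w (diffQuot r A x₀ x) +
      PiQ r A x₀ w x = x := by
  induction x using DQuot_induction with
  | h0 => simp
  | hsm c y hy => rw [map_smul, map_smul, map_smul, map_smul, map_smul, ← smul_add,
      ← smul_add, hy]
  | hadd y z hy hz =>
      rw [map_add, map_add, map_add, map_add, map_add]
      calc _ = (diffQuot r A x₀ (HQ r A x₀ w y) + HQ r A x₀ w (diffQuot r A x₀ y) +
            PiQ r A x₀ w y) + (diffQuot r A x₀ (HQ r A x₀ w z) +
            HQ r A x₀ w (diffQuot r A x₀ z) + PiQ r A x₀ w z) := by abel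
        _ = y + z := by rw [hy, hz]
  | hs σ hσ =>
      by_cases hx₀σ : x₀ ∈ σ
      · have e1 : diffQuot r A x₀ (HQ r A x₀ w
            (mkQD A x₀ (Finsupp.single σ (1 : ℚ)) (single_mem_Dsub hσ))) =
            mkQD A x₀ (diff r (hB r A x₀ w σ))
              (diff_mem r _ (hB_mem r A x₀ hσ)) := by
          rw [HQ_mkQD, mkQD_congr A x₀ (hM_single r A x₀ w σ), diffQuot_mkQD]
        have e2 : HQ r A x₀ w (diffQuot r A x₀
            (mkQD A x₀ (Finsupp.single σ (1 : ℚ)) (single_mem_Dsub hσ))) =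
            mkQD A x₀ (hM r A x₀ w (dBasis r σ))
              (hM_mem r A x₀ (dBasis_mem r A hσ)) := by
          rw [diffQuot_mkQD, mkQD_congr A x₀ (diff_apply_single r σ), HQ_mkQD]
        have e3 : PiQ r A x₀ w
            (mkQD A x₀ (Finsupp.single σ (1 : ℚ)) (single_mem_Dsub hσ)) =
            mkQD A x₀ (piB r A x₀ w σ) (piB_mem r A x₀ hσ) := by
          rw [PiQ_mkQD, mkQD_congr A x₀ (piM_single r A x₀ w σ)]
        rw [e1, e2, e3, ← mkQD_add, ← mkQD_add, mkQD_eq_iff r]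
        exact key_homotopy r A x₀ hord w hσ hx₀σ
      · -- σ does not contain x₀ : the class of σ is zero
        have h0 : mkQD A x₀ (Finsupp.single σ (1 : ℚ)) (single_mem_Dsub hσ) = 0 := by
          rw [mkQD_eq_zero r A x₀]
          exact single_mem_Dsub fun a ha => Finset.mem_erase.mpr
            ⟨fun hc => hx₀σ (hc ▸ ha), hσ ha⟩
        rw [h0]
        simp


lemma PiQ_eq (r : LinearOrder (Subsp l)) (A : Finset (Subsp l)) (x₀ : Subsp l)
    (hord : GoodOrder r A x₀) (w : Subsp l) (x : DQuot A x₀) :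
    PiQ r A x₀ w x = x - (diffQuot r A x₀ (HQ r A x₀ w x) +
      HQ r A x₀ w (diffQuot r A x₀ x)) := by
  rw [eq_sub_iff_add_eq, add_comm]
  exact homotopy_Q r A x₀ hord w x

lemma PiQ_diffQuot (r : LinearOrder (Subsp l)) (A : Finset (Subsp l)) (x₀ : Subsp l)
    (hord : GoodOrder r A x₀) (w : Subsp l) (x : DQuot A x₀) :
    PiQ r A x₀ w (diffQuot r A x₀ x) = diffQuot r A x₀ (PiQ r A x₀ w x) := by
  rw [PiQ_eq r A x₀ hord w (diffQuot r A x₀ x), PiQ_eq r A x₀ hord w x, map_sub, map_add,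
    diffQuot_sq r A x₀ x, diffQuot_sq r A x₀ (HQ r A x₀ w x), map_zero, add_zero, zero_add]

lemma classSet_disjoint (A : Finset (Subsp l)) (x₀ : Subsp l) {w w' a : Subsp l}
    (h : w ≠ w') (ha : a ∈ classSet A x₀ w) (ha' : a ∈ classSet A x₀ w') : False :=
  h ((classSet_spec A x₀ ha).2.2.symm.trans (classSet_spec A x₀ ha').2.2)

/-! #### Membership lemmas for `Vsub` -/

lemma mem_Iuv_of (A : Finset (Subsp l)) (x₀ u v : Subsp l) {f : DFull l}
    (hf : f ∈ IuvFull A x₀ u v) (hfA : f ∈ Dsub A) :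
    mkQD A x₀ f hfA ∈ Iuv A x₀ u v := by
  refine ⟨⟨f, hfA⟩, ?_, rfl⟩
  simpa [Submodule.mem_comap, Submodule.subtype_apply] using hf

lemma Iuv_le_Vsub (A : Finset (Subsp l)) (x₀ : Subsp l) {p : Subsp l × Subsp l}
    (hp : p ∈ Epairs A x₀) : Iuv A x₀ p.1 p.2 ≤ Vsub A x₀ :=
  le_iSup₂ (f := fun (p : Subsp l × Subsp l) (_ : p ∈ Epairs A x₀) => Iuv A x₀ p.1 p.2) p hp

lemma mem_Epairs (A : Finset (Subsp l)) (x₀ : Subsp l) {u v : Subsp l}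
    (hu : u ∈ A) (hux₀ : u ≠ x₀) (hv : v ∈ A) (hvx₀ : v ≠ x₀)
    (hcl : x₀ ⊓ u = x₀ ⊓ v) (huv : u ≠ v) : (u, v) ∈ Epairs A x₀ :=
  ⟨Finset.mem_erase.mpr ⟨hux₀, hu⟩, Finset.mem_erase.mpr ⟨hvx₀, hv⟩, hcl, huv⟩

/-- A basis element with two classmates lies in `V`. -/
lemma genA_mem_V (r : LinearOrder (Subsp l)) (A : Finset (Subsp l)) (x₀ : Subsp l)
    {σ : Finset (Subsp l)} (hσA : σ ⊆ A) (hx₀σ : x₀ ∈ σ) {u v : Subsp l}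
    (huσ : u ∈ σ) (hvσ : v ∈ σ) (huv : u ≠ v) (hux₀ : u ≠ x₀) (hvx₀ : v ≠ x₀)
    (hcl : x₀ ⊓ u = x₀ ⊓ v) :
    mkQD A x₀ (Finsupp.single σ (1 : ℚ)) (single_mem_Dsub hσA) ∈ Vsub A x₀ := by
  refine Iuv_le_Vsub A x₀ (p := (u, v))
    (mem_Epairs A x₀ (hσA huσ) hux₀ (hσA hvσ) hvx₀ hcl huv) ?_
  refine mem_Iuv_of A x₀ u v ?_ _
  refine Submodule.subset_span (Or.inr ⟨((σ.erase x₀).erase u).erase v, ?_, ?_⟩)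
  · intro a ha
    rw [Finset.mem_coe, Finset.mem_erase, Finset.mem_erase, Finset.mem_erase] at ha
    obtain ⟨hav, hau, hax₀, haσ⟩ := ha
    refine ⟨hσA haσ, ?_⟩
    intro hmem
    rcases hmem with h | h | h
    · exact hax₀ h
    · exact hau h
    · exact hav h
  · congr 1
    ext a
    simp only [Finset.mem_insert, Finset.mem_erase]
    constructor
    · intro ha
      by_cases h1 : a = x₀
      · exact Or.inl h1
      by_cases h2 : a = u
      · exact Or.inr (Or.inl h2)
      by_cases h3 : a = v
      · exact Or.inr (Or.inr (Or.inl h3))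
      exact Or.inr (Or.inr (Or.inr ⟨h3, h2, h1, ha⟩))
    · intro ha
      rcases ha with h | h | h | ⟨_, _, _, h⟩
      · exact h ▸ hx₀σ
      · exact h ▸ huσ
      · exact h ▸ hvσ
      · exact h

/-- An elementary swap difference lies in `V`. -/
lemma genB_mem_V (r : LinearOrder (Subsp l)) (A : Finset (Subsp l)) (x₀ : Subsp l)
    {σ : Finset (Subsp l)} (hσA : σ ⊆ A) (hx₀σ : x₀ ∈ σ) {u v : Subsp l}
    (huσ : u ∈ σ) (hux₀ : u ≠ x₀) (hvσ : v ∉ σ) (hvA : v ∈ A) (hvx₀ : v ≠ x₀)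
    (huv : u ≠ v) (hcl : x₀ ⊓ u = x₀ ⊓ v) :
    mkQD A x₀ (Finsupp.single σ (1 : ℚ) - Finsupp.single (insert v (σ.erase u)) (1 : ℚ))
      (Submodule.sub_mem _ (single_mem_Dsub hσA) (single_mem_Dsub (by
        intro a ha
        rcases Finset.mem_insert.mp ha with h | h
        · exact h ▸ hvA
        · exact hσA (Finset.mem_of_mem_erase h)))) ∈ Vsub A x₀ := by
  refine Iuv_le_Vsub A x₀ (p := (u, v))
    (mem_Epairs A x₀ (hσA huσ) hux₀ hvA hvx₀ hcl huv) ?_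
  refine mem_Iuv_of A x₀ u v ?_ _
  refine Submodule.subset_span (Or.inl ⟨(σ.erase x₀).erase u, ?_, ?_⟩)
  · intro a ha
    rw [Finset.mem_coe, Finset.mem_erase, Finset.mem_erase] at ha
    obtain ⟨hau, hax₀, haσ⟩ := ha
    refine ⟨hσA haσ, ?_⟩
    intro hmem
    rcases hmem with h | h | h
    · exact hax₀ h
    · exact hau h
    · exact hvσ (h ▸ haσ)
  · congr 1
    · congr 1
      ext a
      simp only [Finset.mem_insert, Finset.mem_erase]
      constructor
      · intro ha
        by_cases hx : a = x₀
        · exact Or.inl hx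
        by_cases hu : a = u
        · exact Or.inr (Or.inl hu)
        exact Or.inr (Or.inr ⟨hu, hx, ha⟩)
      · rintro (h | h | ⟨_, _, h⟩)
        · exact h ▸ hx₀σ
        · exact h ▸ huσ
        · exact h
    · congr 1
      ext a
      simp only [Finset.mem_insert, Finset.mem_erase]
      constructor
      · rintro (h | h)
        · exact Or.inr (Or.inl h)
        · obtain ⟨hau, haσ⟩ := h
          by_cases hx : a = x₀
          · exact Or.inl hx
          · exact Or.inr (Or.inr ⟨hau, hx, haσ⟩)
      · rintro (h | h | ⟨hau, hax₀, haσ⟩)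
        · subst h
          exact Or.inr ⟨Ne.symm hux₀, hx₀σ⟩
        · exact Or.inl h
        · exact Or.inr ⟨hau, haσ⟩

/-- The image of `H_w` is contained in `V`. -/
lemma HQ_mem_V (r : LinearOrder (Subsp l)) (A : Finset (Subsp l)) (x₀ w : Subsp l)
    (x : DQuot A x₀) : HQ r A x₀ w x ∈ Vsub A x₀ := by
  induction x using DQuot_induction with
  | h0 => rw [map_zero]; exact Submodule.zero_mem _
  | hsm c y hy => rw [map_smul]; exact Submodule.smul_mem _ _ hy
  | hadd y z hy hz => rw [map_add]; exact Submodule.add_mem _ hy hz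
  | hs σ hσ =>
      rw [HQ_mkQD, mkQD_congr A x₀ (rfl : hM r A x₀ w (Finsupp.single σ (1:ℚ)) =
        hM r A x₀ w (Finsupp.single σ (1:ℚ)))]
      rw [mkQD_congr A x₀ (hM_single r A x₀ w σ)]
      by_cases hguard : x₀ ∈ σ ∧ (σ ∩ classSet A x₀ w).Nonempty ∧ mW r A x₀ w ∉ σ
      · obtain ⟨h1, h2, h3⟩ := hguard
        obtain ⟨u, huT⟩ := h2
        have huσ : u ∈ σ := (Finset.mem_inter.mp huT).1
        have huC : u ∈ classSet A x₀ w := (Finset.mem_inter.mp huT).2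
        have hCne : (classSet A x₀ w).Nonempty := ⟨u, huC⟩
        have hmC : mW r A x₀ w ∈ classSet A x₀ w := mW_mem r A x₀ hCne
        have hmA : mW r A x₀ w ∈ A := (classSet_spec A x₀ hmC).1
        have hins : insert (mW r A x₀ w) σ ⊆ A := Finset.insert_subset hmA hσ
        rw [mkQD_congr A x₀ (hB_of_guard r A x₀ w h1 ⟨u, huT⟩ h3)]
        have hsm := mkQD_smul A x₀
          ((-1 : ℚ) ^ pos r (insert (mW r A x₀ w) σ) (mW r A x₀ w))
          (single_mem_Dsub hins)
        rw [hsm]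
        refine Submodule.smul_mem _ _ ?_
        refine genA_mem_V r A x₀ hins (Finset.mem_insert_of_mem h1)
          (u := u) (v := mW r A x₀ w) (Finset.mem_insert_of_mem huσ)
          (Finset.mem_insert_self _ _) (fun hc => h3 (hc ▸ huσ))
          (classSet_spec A x₀ huC).2.1 (classSet_spec A x₀ hmC).2.1
          ((classSet_spec A x₀ huC).2.2.trans (classSet_spec A x₀ hmC).2.2.symm)
      · have h0 : hB r A x₀ w σ = 0 := by unfold hB; rw [if_neg hguard]
        rw [mkQD_congr A x₀ h0]
        have : mkQD A x₀ (0 : DFull l) _ = 0 := map_zero (quotProj A x₀)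
        rw [this]
        exact Submodule.zero_mem _


/-! #### The composite reduction operator `Ψ` -/

/-- Composite of the `Π_w` over a list of class values (first element applied first). -/
def PsiL (r : LinearOrder (Subsp l)) (A : Finset (Subsp l)) (x₀ : Subsp l) :
    List (Subsp l) → (DQuot A x₀ →ₗ[ℚ] DQuot A x₀)
  | [] => LinearMap.id
  | w :: t => (PsiL r A x₀ t).comp (PiQ r A x₀ w)

lemma PsiL_nil (r : LinearOrder (Subsp l)) (A : Finset (Subsp l)) (x₀ : Subsp l)
    (x : DQuot A x₀) : PsiL r A x₀ [] x = x := rfl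

lemma PsiL_cons (r : LinearOrder (Subsp l)) (A : Finset (Subsp l)) (x₀ w : Subsp l)
    (t : List (Subsp l)) (x : DQuot A x₀) :
    PsiL r A x₀ (w :: t) x = PsiL r A x₀ t (PiQ r A x₀ w x) := rfl

lemma PsiL_diffQuot (r : LinearOrder (Subsp l)) (A : Finset (Subsp l)) (x₀ : Subsp l)
    (hord : GoodOrder r A x₀) :
    ∀ (t : List (Subsp l)) (x : DQuot A x₀),
      PsiL r A x₀ t (diffQuot r A x₀ x) = diffQuot r A x₀ (PsiL r A x₀ t x) := by
  intro t
  induction t with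
  | nil => intro x; rfl
  | cons w t ih =>
      intro x
      rw [PsiL_cons, PsiL_cons, PiQ_diffQuot r A x₀ hord, ih]

lemma PsiL_DA' (r : LinearOrder (Subsp l)) (A : Finset (Subsp l)) (x₀ : Subsp l) :
    ∀ (t : List (Subsp l)) {f : DFull l} (hf' : f ∈ Dsub (A.erase x₀)) (hf : f ∈ Dsub A),
      PsiL r A x₀ t (mkQD A x₀ f hf) = 0 := by
  intro t
  induction t with
  | nil =>
      intro f hf' hf
      rw [PsiL_nil, mkQD_eq_zero r A x₀]
      exact hf'
  | cons w t ih =>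
      intro f hf' hf
      rw [PsiL_cons, PiQ_mkQD]
      exact ih (piM_mem' r A x₀ hf') (piM_mem r A x₀ hf)

lemma x0_not_mem_classSet (A : Finset (Subsp l)) (x₀ w : Subsp l) :
    x₀ ∉ classSet A x₀ w := fun h => (classSet_spec A x₀ h).2.1 rfl

lemma mW_mem_A (r : LinearOrder (Subsp l)) (A : Finset (Subsp l)) (x₀ : Subsp l)
    {w : Subsp l} (h : (classSet A x₀ w).Nonempty) : mW r A x₀ w ∈ A :=
  (classSet_spec A x₀ (mW_mem r A x₀ h)).1

/-- Invariant used to kill type-(a) generators. -/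
def ShapeA (r : LinearOrder (Subsp l)) (A : Finset (Subsp l)) (x₀ wstar : Subsp l)
    (f : DFull l) : Prop :=
  f ∈ Dsub (A.erase x₀) ∨ ∃ σ : Finset (Subsp l), σ ⊆ A ∧ x₀ ∈ σ ∧
    2 ≤ (σ ∩ classSet A x₀ wstar).card ∧ f = Finsupp.single σ (1 : ℚ)

lemma inter_classSet_swap (r : LinearOrder (Subsp l)) (A : Finset (Subsp l)) (x₀ : Subsp l)
    {w w' : Subsp l} (hww : w ≠ w') (hCne : (classSet A x₀ w).Nonempty)
    (σ : Finset (Subsp l)) :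
    (insert (mW r A x₀ w) (σ \ classSet A x₀ w)) ∩ classSet A x₀ w' =
      σ ∩ classSet A x₀ w' := by
  ext a
  simp only [Finset.mem_inter, Finset.mem_insert, Finset.mem_sdiff]
  constructor
  · rintro ⟨h | ⟨haσ, hnC⟩, haC'⟩
    · exact absurd haC' (fun hc => classSet_disjoint A x₀ hww (h ▸ mW_mem r A x₀ hCne) hc)
    · exact ⟨haσ, haC'⟩
  · rintro ⟨haσ, haC'⟩
    exact ⟨Or.inr ⟨haσ, fun hc => classSet_disjoint A x₀ hww hc haC'⟩, haC'⟩

lemma stepA (r : LinearOrder (Subsp l)) (A : Finset (Subsp l)) (x₀ : Subsp l)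
    {wstar : Subsp l} {f : DFull l} (h : ShapeA r A x₀ wstar f) (w : Subsp l) :
    ShapeA r A x₀ wstar (piM r A x₀ w f) ∧
      (w = wstar → piM r A x₀ w f ∈ Dsub (A.erase x₀)) := by
  rcases h with h | ⟨σ, hσA, hx₀σ, hcard, rfl⟩
  · exact ⟨Or.inl (piM_mem' r A x₀ h), fun _ => piM_mem' r A x₀ h⟩
  · rw [piM_single]
    by_cases hw : w = wstar
    · subst hw
      rw [piB_of_two r A x₀ w hcard]
      exact ⟨Or.inl (Submodule.zero_mem _), fun _ => Submodule.zero_mem _⟩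
    · refine ⟨?_, fun hc => absurd hc hw⟩
      by_cases h2 : 2 ≤ (σ ∩ classSet A x₀ w).card
      · rw [piB_of_two r A x₀ w h2]
        exact Or.inl (Submodule.zero_mem _)
      by_cases h1 : (σ ∩ classSet A x₀ w).card = 1
      · rw [piB_of_one r A x₀ w h1]
        have hne : (σ ∩ classSet A x₀ w).Nonempty := Finset.card_pos.mp (by omega)
        have hCne : (classSet A x₀ w).Nonempty := classSet_nonempty_of_inter r hne
        refine Or.inr ⟨insert (mW r A x₀ w) (σ \ classSet A x₀ w), ?_, ?_, ?_, rfl⟩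
        · exact Finset.insert_subset (mW_mem_A r A x₀ hCne)
            ((Finset.sdiff_subset).trans hσA)
        · exact Finset.mem_insert_of_mem
            (Finset.mem_sdiff.mpr ⟨hx₀σ, x0_not_mem_classSet A x₀ w⟩)
        · rw [inter_classSet_swap r A x₀ hw hCne σ]
          exact hcard
      · have h0 : σ ∩ classSet A x₀ w = ∅ := Finset.card_eq_zero.mp (by omega)
        rw [piB_of_zero r A x₀ w h0]
        exact Or.inr ⟨σ, hσA, hx₀σ, hcard, rfl⟩

lemma PsiL_killA (r : LinearOrder (Subsp l)) (A : Finset (Subsp l)) (x₀ : Subsp l)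
    {wstar : Subsp l} :
    ∀ (t : List (Subsp l)), wstar ∈ t → ∀ {f : DFull l}, ShapeA r A x₀ wstar f →
      ∀ (hf : f ∈ Dsub A), PsiL r A x₀ t (mkQD A x₀ f hf) = 0 := by
  intro t
  induction t with
  | nil => intro h; exact absurd h List.not_mem_nil
  | cons w t ih =>
      intro hmem f hshape hf
      rw [PsiL_cons, PiQ_mkQD]
      by_cases hw : w = wstar
      · exact PsiL_DA' r A x₀ t ((stepA r A x₀ hshape w).2 hw) _
      · have hmem' : wstar ∈ t := by
          rcases List.mem_cons.mp hmem with h | h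
          · exact absurd h.symm hw
          · exact h
        exact ih hmem' (stepA r A x₀ hshape w).1 _

/-- Invariant used to kill type-(b) generators. -/
def ShapeB (r : LinearOrder (Subsp l)) (A : Finset (Subsp l)) (x₀ u v : Subsp l)
    (f : DFull l) : Prop :=
  f ∈ Dsub (A.erase x₀) ∨ ∃ τ : Finset (Subsp l), τ ⊆ A ∧ x₀ ∉ τ ∧ u ∉ τ ∧ v ∉ τ ∧
    f = Finsupp.single (insert x₀ (insert u τ)) (1 : ℚ) -
        Finsupp.single (insert x₀ (insert v τ)) (1 : ℚ)

lemma insert2_inter_classSet (r : LinearOrder (Subsp l)) (A : Finset (Subsp l))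
    (x₀ : Subsp l) {w b : Subsp l} (hb : b ∉ classSet A x₀ w) (τ : Finset (Subsp l)) :
    (insert x₀ (insert b τ)) ∩ classSet A x₀ w = τ ∩ classSet A x₀ w := by
  ext a
  simp only [Finset.mem_inter, Finset.mem_insert]
  constructor
  · rintro ⟨h | h | h, haC⟩
    · exact absurd haC (h ▸ x0_not_mem_classSet A x₀ w)
    · exact absurd haC (h ▸ hb)
    · exact ⟨h, haC⟩
  · rintro ⟨haτ, haC⟩
    exact ⟨Or.inr (Or.inr haτ), haC⟩

lemma sdiff_insert2 (r : LinearOrder (Subsp l)) (A : Finset (Subsp l)) (x₀ : Subsp l)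
    {w b m : Subsp l} (hb : b ∉ classSet A x₀ w) (τ : Finset (Subsp l)) :
    insert m ((insert x₀ (insert b τ)) \ classSet A x₀ w) =
      insert x₀ (insert b (insert m (τ \ classSet A x₀ w))) := by
  ext a
  simp only [Finset.mem_insert, Finset.mem_sdiff]
  constructor
  · rintro (h | ⟨(h | h | h), hnC⟩)
    · exact Or.inr (Or.inr (Or.inl h))
    · exact Or.inl h
    · exact Or.inr (Or.inl h)
    · exact Or.inr (Or.inr (Or.inr ⟨h, hnC⟩))
  · rintro (h | h | h | ⟨h, hnC⟩)
    · exact Or.inr ⟨Or.inl h, h ▸ (x0_not_mem_classSet A x₀ w)⟩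
    · exact Or.inr ⟨Or.inr (Or.inl h), h ▸ hb⟩
    · exact Or.inl h
    · exact Or.inr ⟨Or.inr (Or.inr h), hnC⟩

lemma stepB (r : LinearOrder (Subsp l)) (A : Finset (Subsp l)) (x₀ : Subsp l)
    {wstar u v : Subsp l} (hu : u ∈ classSet A x₀ wstar) (hv : v ∈ classSet A x₀ wstar)
    (huv : u ≠ v) {f : DFull l} (h : ShapeB r A x₀ u v f) (w : Subsp l) :
    ShapeB r A x₀ u v (piM r A x₀ w f) ∧
      (w = wstar → piM r A x₀ w f ∈ Dsub (A.erase x₀)) := by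
  rcases h with h | ⟨τ, hτA, hx₀τ, huτ, hvτ, rfl⟩
  · exact ⟨Or.inl (piM_mem' r A x₀ h), fun _ => piM_mem' r A x₀ h⟩
  · rw [map_sub, piM_single, piM_single]
    by_cases hw : w = wstar
    · subst hw
      by_cases hτC : (τ ∩ classSet A x₀ w).Nonempty
      · -- both class parts have two elements
        obtain ⟨t0, ht0⟩ := hτC
        have ht0τ : t0 ∈ τ := (Finset.mem_inter.mp ht0).1
        have ht0C : t0 ∈ classSet A x₀ w := (Finset.mem_inter.mp ht0).2
        have hcu : 2 ≤ ((insert x₀ (insert u τ)) ∩ classSet A x₀ w).card := by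
          refine Finset.one_lt_card.mpr ⟨u, Finset.mem_inter.mpr
            ⟨Finset.mem_insert_of_mem (Finset.mem_insert_self _ _), hu⟩, t0,
            Finset.mem_inter.mpr ⟨Finset.mem_insert_of_mem
              (Finset.mem_insert_of_mem ht0τ), ht0C⟩, fun hc => huτ (hc ▸ ht0τ)⟩
        have hcv : 2 ≤ ((insert x₀ (insert v τ)) ∩ classSet A x₀ w).card := by
          refine Finset.one_lt_card.mpr ⟨v, Finset.mem_inter.mpr
            ⟨Finset.mem_insert_of_mem (Finset.mem_insert_self _ _), hv⟩, t0,
            Finset.mem_inter.mpr ⟨Finset.mem_insert_of_mem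
              (Finset.mem_insert_of_mem ht0τ), ht0C⟩, fun hc => hvτ (hc ▸ ht0τ)⟩
        rw [piB_of_two r A x₀ w hcu, piB_of_two r A x₀ w hcv, sub_self]
        exact ⟨Or.inl (Submodule.zero_mem _), fun _ => Submodule.zero_mem _⟩
      · -- the class parts are the singletons {u} and {v}
        have hτC0 : τ ∩ classSet A x₀ w = ∅ :=
          Finset.not_nonempty_iff_eq_empty.mp hτC
        have hiu : (insert x₀ (insert u τ)) ∩ classSet A x₀ w = {u} := by
          ext a
          simp only [Finset.mem_inter, Finset.mem_insert, Finset.mem_singleton]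
          constructor
          · rintro ⟨h | h | h, haC⟩
            · exact absurd haC (h ▸ x0_not_mem_classSet A x₀ w)
            · exact h
            · exact absurd (Finset.mem_inter.mpr ⟨h, haC⟩)
                (by rw [hτC0]; exact Finset.notMem_empty a)
          · rintro rfl
            exact ⟨Or.inr (Or.inl rfl), hu⟩
        have hiv : (insert x₀ (insert v τ)) ∩ classSet A x₀ w = {v} := by
          ext a
          simp only [Finset.mem_inter, Finset.mem_insert, Finset.mem_singleton]
          constructor
          · rintro ⟨h | h | h, haC⟩
            · exact absurd haC (h ▸ x0_not_mem_classSet A x₀ w)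
            · exact h
            · exact absurd (Finset.mem_inter.mpr ⟨h, haC⟩)
                (by rw [hτC0]; exact Finset.notMem_empty a)
          · rintro rfl
            exact ⟨Or.inr (Or.inl rfl), hv⟩
        have hsdu : (insert x₀ (insert u τ)) \ classSet A x₀ w = insert x₀ τ := by
          ext a
          simp only [Finset.mem_sdiff, Finset.mem_insert]
          constructor
          · rintro ⟨h | h | h, hnC⟩
            · exact Or.inl h
            · exact absurd hu (h ▸ hnC)
            · exact Or.inr h
          · rintro (h | h)
            · exact ⟨Or.inl h, h ▸ x0_not_mem_classSet A x₀ w⟩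
            · refine ⟨Or.inr (Or.inr h), fun hc => ?_⟩
              exact (by rw [hτC0]; exact Finset.notMem_empty a : a ∉ τ ∩ classSet A x₀ w)
                (Finset.mem_inter.mpr ⟨h, hc⟩)
        have hsdv : (insert x₀ (insert v τ)) \ classSet A x₀ w = insert x₀ τ := by
          ext a
          simp only [Finset.mem_sdiff, Finset.mem_insert]
          constructor
          · rintro ⟨h | h | h, hnC⟩
            · exact Or.inl h
            · exact absurd hv (h ▸ hnC)
            · exact Or.inr h
          · rintro (h | h)
            · exact ⟨Or.inl h, h ▸ x0_not_mem_classSet A x₀ w⟩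
            · refine ⟨Or.inr (Or.inr h), fun hc => ?_⟩
              exact (by rw [hτC0]; exact Finset.notMem_empty a : a ∉ τ ∩ classSet A x₀ w)
                (Finset.mem_inter.mpr ⟨h, hc⟩)
        rw [piB_of_one r A x₀ w (by rw [hiu]; simp),
          piB_of_one r A x₀ w (by rw [hiv]; simp), hsdu, hsdv, sub_self]
        exact ⟨Or.inl (Submodule.zero_mem _), fun _ => Submodule.zero_mem _⟩
    · -- `w` is a different class
      refine (fun hmain => ⟨hmain, fun hc => absurd hc hw⟩) ?_
      have hwne : w ≠ wstar := hw
      have huCne : u ∉ classSet A x₀ w := fun hc => classSet_disjoint A x₀ hwne hc hu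
      have hvCne : v ∉ classSet A x₀ w := fun hc => classSet_disjoint A x₀ hwne hc hv
      have hiu : (insert x₀ (insert u τ)) ∩ classSet A x₀ w = τ ∩ classSet A x₀ w :=
        insert2_inter_classSet r A x₀ huCne τ
      have hiv : (insert x₀ (insert v τ)) ∩ classSet A x₀ w = τ ∩ classSet A x₀ w :=
        insert2_inter_classSet r A x₀ hvCne τ
      by_cases h2 : 2 ≤ (τ ∩ classSet A x₀ w).card
      · rw [piB_of_two r A x₀ w (by rw [hiu]; exact h2),
          piB_of_two r A x₀ w (by rw [hiv]; exact h2), sub_self]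
        exact Or.inl (Submodule.zero_mem _)
      by_cases h1 : (τ ∩ classSet A x₀ w).card = 1
      · have hne : (τ ∩ classSet A x₀ w).Nonempty := Finset.card_pos.mp (by omega)
        have hCne : (classSet A x₀ w).Nonempty := classSet_nonempty_of_inter r hne
        rw [piB_of_one r A x₀ w (by rw [hiu]; exact h1),
          piB_of_one r A x₀ w (by rw [hiv]; exact h1),
          sdiff_insert2 r A x₀ huCne τ, sdiff_insert2 r A x₀ hvCne τ]
        refine Or.inr ⟨insert (mW r A x₀ w) (τ \ classSet A x₀ w), ?_, ?_, ?_, ?_, rfl⟩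
        · exact Finset.insert_subset (mW_mem_A r A x₀ hCne)
            ((Finset.sdiff_subset).trans hτA)
        · intro hc
          rcases Finset.mem_insert.mp hc with h | h
          · exact (classSet_spec A x₀ (mW_mem r A x₀ hCne)).2.1 h.symm
          · exact hx₀τ (Finset.mem_sdiff.mp h).1
        · intro hc
          rcases Finset.mem_insert.mp hc with h | h
          · exact classSet_disjoint A x₀ hwne
              (by rw [h]; exact mW_mem r A x₀ hCne) hu
          · exact huτ (Finset.mem_sdiff.mp h).1
        · intro hc
          rcases Finset.mem_insert.mp hc with h | h
          · exact classSet_disjoint A x₀ hwne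
              (by rw [h]; exact mW_mem r A x₀ hCne) hv
          · exact hvτ (Finset.mem_sdiff.mp h).1
      · have h0 : τ ∩ classSet A x₀ w = ∅ := Finset.card_eq_zero.mp (by omega)
        rw [piB_of_zero r A x₀ w (by rw [hiu]; exact h0),
          piB_of_zero r A x₀ w (by rw [hiv]; exact h0)]
        exact Or.inr ⟨τ, hτA, hx₀τ, huτ, hvτ, rfl⟩


lemma PsiL_killB (r : LinearOrder (Subsp l)) (A : Finset (Subsp l)) (x₀ : Subsp l)
    {wstar u v : Subsp l} (hu : u ∈ classSet A x₀ wstar) (hv : v ∈ classSet A x₀ wstar)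
    (huv : u ≠ v) :
    ∀ (t : List (Subsp l)), wstar ∈ t → ∀ {f : DFull l}, ShapeB r A x₀ u v f →
      ∀ (hf : f ∈ Dsub A), PsiL r A x₀ t (mkQD A x₀ f hf) = 0 := by
  intro t
  induction t with
  | nil => intro h; exact absurd h List.not_mem_nil
  | cons w t ih =>
      intro hmem f hshape hf
      rw [PsiL_cons, PiQ_mkQD]
      by_cases hw : w = wstar
      · exact PsiL_DA' r A x₀ t ((stepB r A x₀ hu hv huv hshape w).2 hw) _
      · have hmem' : wstar ∈ t := by
          rcases List.mem_cons.mp hmem with h | h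
          · exact absurd h.symm hw
          · exact h
        exact ih hmem' (stepB r A x₀ hu hv huv hshape w).1 _

lemma IuvFull_le_Dsub (A : Finset (Subsp l)) (x₀ : Subsp l) {u v : Subsp l}
    (hx₀A : x₀ ∈ A) (huA : u ∈ A) (hvA : v ∈ A) :
    IuvFull A x₀ u v ≤ Dsub A := by
  rw [IuvFull, Submodule.span_le]
  rintro f (⟨τ, hτ, rfl⟩ | ⟨τ, hτ, rfl⟩)
  · have hτA : ∀ a ∈ τ, a ∈ A := fun a ha => (hτ (Finset.mem_coe.mpr ha)).1
    refine Submodule.sub_mem _ (single_mem_Dsub ?_) (single_mem_Dsub ?_) <;>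
      · intro a ha
        rcases Finset.mem_insert.mp ha with h | h
        · exact h ▸ hx₀A
        rcases Finset.mem_insert.mp h with h' | h'
        · first
            | exact h' ▸ huA
            | exact h' ▸ hvA
        · exact hτA a h'
  · have hτA : ∀ a ∈ τ, a ∈ A := fun a ha => (hτ (Finset.mem_coe.mpr ha)).1
    refine single_mem_Dsub ?_
    intro a ha
    rcases Finset.mem_insert.mp ha with h | h
    · exact h ▸ hx₀A
    rcases Finset.mem_insert.mp h with h' | h'
    · exact h' ▸ huA
    rcases Finset.mem_insert.mp h' with h'' | h''
    · exact h'' ▸ hvA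
    · exact hτA a h''

lemma PsiL_kill (r : LinearOrder (Subsp l)) (A : Finset (Subsp l)) (x₀ : Subsp l)
    (hx₀A : x₀ ∈ A) (lst : List (Subsp l))
    (hlst : ∀ y ∈ A.erase x₀, x₀ ⊓ y ∈ lst) :
    ∀ x ∈ Vsub A x₀, PsiL r A x₀ lst x = 0 := by
  have hle : Vsub A x₀ ≤ LinearMap.ker (PsiL r A x₀ lst) := by
    show (⨆ p ∈ Epairs A x₀, Iuv A x₀ p.1 p.2) ≤ _
    refine iSup₂_le fun p hp => ?_
    obtain ⟨hp1, hp2, hpcl, hpne⟩ := hp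
    have hu1A : p.1 ∈ A := Finset.mem_of_mem_erase hp1
    have hu1x₀ : p.1 ≠ x₀ := (Finset.mem_erase.mp hp1).1
    have hu2A : p.2 ∈ A := Finset.mem_of_mem_erase hp2
    have hu2x₀ : p.2 ≠ x₀ := (Finset.mem_erase.mp hp2).1
    have hu : p.1 ∈ classSet A x₀ (x₀ ⊓ p.1) :=
      (mem_classSet A x₀).mpr ⟨hu1A, hu1x₀, rfl⟩
    have hv : p.2 ∈ classSet A x₀ (x₀ ⊓ p.1) :=
      (mem_classSet A x₀).mpr ⟨hu2A, hu2x₀, hpcl.symm⟩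
    have hwlst : x₀ ⊓ p.1 ∈ lst := hlst p.1 (mem_erase_x0 r A x₀ hu1A hu1x₀)
    have hgen : ∀ g ∈ IuvFull A x₀ p.1 p.2, ∀ hgA : g ∈ Dsub A,
        PsiL r A x₀ lst (mkQD A x₀ g hgA) = 0 := by
      intro g hg
      induction hg using Submodule.span_induction with
      | mem f hfmem =>
          intro hfA
          rcases hfmem with ⟨τ, hτ, heq⟩ | ⟨τ, hτ, heq⟩
          · -- type (b) generator
            subst heq
            have hτA : τ ⊆ A := fun a ha => (hτ (Finset.mem_coe.mpr ha)).1
            have hτx₀ : x₀ ∉ τ := fun hc =>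
              (hτ (Finset.mem_coe.mpr hc)).2 (Or.inl rfl)
            have hτu : p.1 ∉ τ := fun hc =>
              (hτ (Finset.mem_coe.mpr hc)).2 (Or.inr (Or.inl rfl))
            have hτv : p.2 ∉ τ := fun hc =>
              (hτ (Finset.mem_coe.mpr hc)).2 (Or.inr (Or.inr rfl))
            refine PsiL_killB r A x₀ hu hv hpne lst hwlst ?_ hfA
            refine Or.inr ⟨τ, hτA, hτx₀, hτu, hτv, ?_⟩
            congr 1 <;>
              · congr 1
                ext a
                simp only [Finset.mem_insert]
          · -- type (a) generator
            subst heq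
            refine PsiL_killA r A x₀ lst hwlst ?_ hfA
            refine Or.inr ⟨insert x₀ (insert p.1 (insert p.2 τ)), ?_, ?_, ?_, ?_⟩
            · intro a ha
              rcases Finset.mem_insert.mp ha with h | h
              · exact h ▸ hx₀A
              rcases Finset.mem_insert.mp h with h' | h'
              · exact h' ▸ hu1A
              rcases Finset.mem_insert.mp h' with h'' | h''
              · exact h'' ▸ hu2A
              · exact (hτ (Finset.mem_coe.mpr h'')).1
            · exact Finset.mem_insert_self _ _
            · refine Finset.one_lt_card.mpr ⟨p.1, Finset.mem_inter.mpr
                ⟨Finset.mem_insert_of_mem (Finset.mem_insert_self _ _), hu⟩, p.2,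
                Finset.mem_inter.mpr ⟨Finset.mem_insert_of_mem
                  (Finset.mem_insert_of_mem (Finset.mem_insert_self _ _)), hv⟩, hpne⟩
            · congr 1
      | zero =>
          intro h
          have h00 : mkQD A x₀ (0 : DFull l) h = 0 := map_zero (quotProj A x₀)
          rw [h00, map_zero]
      | add a b ha hb iha ihb =>
          intro h
          have haA : a ∈ Dsub A := IuvFull_le_Dsub A x₀ hx₀A hu1A hu2A ha
          have hbA : b ∈ Dsub A := IuvFull_le_Dsub A x₀ hx₀A hu1A hu2A hb
          rw [show h = Submodule.add_mem _ haA hbA from rfl, mkQD_add A x₀ haA hbA, map_add,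
            iha haA, ihb hbA, add_zero]
      | smul c a ha iha =>
          intro h
          have haA : a ∈ Dsub A := IuvFull_le_Dsub A x₀ hx₀A hu1A hu2A ha
          rw [show h = Submodule.smul_mem _ c haA from rfl, mkQD_smul A x₀ c haA, map_smul,
            iha haA, smul_zero]
    rw [Iuv, Submodule.map_le_iff_le_comap]
    rintro ⟨g, hgA⟩ hgIuv
    simp only [Submodule.mem_comap, Submodule.subtype_apply] at hgIuv
    simp only [Submodule.mem_comap, LinearMap.mem_ker]
    exact hgen g hgIuv hgA
  exact fun x hx => hle hx

/-! #### `id - Ψ` lands in `V` -/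

lemma basis_sub_mem (r : LinearOrder (Subsp l)) (A : Finset (Subsp l)) (x₀ : Subsp l) :
    ∀ (t : List (Subsp l)) (σ : Finset (Subsp l)) (hσ : σ ⊆ A),
      mkQD A x₀ (Finsupp.single σ (1 : ℚ)) (single_mem_Dsub hσ) -
        PsiL r A x₀ t (mkQD A x₀ (Finsupp.single σ (1 : ℚ)) (single_mem_Dsub hσ)) ∈
        Vsub A x₀ := by
  intro t
  induction t with
  | nil =>
      intro σ hσ
      rw [PsiL_nil, sub_self]
      exact Submodule.zero_mem _
  | cons w t ih =>
      intro σ hσ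
      by_cases hx₀σ : x₀ ∈ σ
      · rw [PsiL_cons, PiQ_mkQD, mkQD_congr A x₀ (piM_single r A x₀ w σ)]
        by_cases h2 : 2 ≤ (σ ∩ classSet A x₀ w).card
        · rw [mkQD_congr A x₀ (piB_of_two r A x₀ w h2)]
          have h00 : mkQD A x₀ (0 : DFull l)
              ((piB_of_two r A x₀ w h2) ▸ ((piM_single r A x₀ w σ) ▸
                piM_mem r A x₀ (single_mem_Dsub hσ))) = 0 := map_zero (quotProj A x₀)
          rw [h00, map_zero, sub_zero]
          obtain ⟨a, haT, b, hbT, hab⟩ := Finset.one_lt_card.mp h2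
          have haσ : a ∈ σ := (Finset.mem_inter.mp haT).1
          have haC : a ∈ classSet A x₀ w := (Finset.mem_inter.mp haT).2
          have hbσ : b ∈ σ := (Finset.mem_inter.mp hbT).1
          have hbC : b ∈ classSet A x₀ w := (Finset.mem_inter.mp hbT).2
          exact genA_mem_V r A x₀ hσ hx₀σ haσ hbσ hab
            (classSet_spec A x₀ haC).2.1 (classSet_spec A x₀ hbC).2.1
            ((classSet_spec A x₀ haC).2.2.trans (classSet_spec A x₀ hbC).2.2.symm)
        by_cases h1 : (σ ∩ classSet A x₀ w).card = 1
        · obtain ⟨u, huseq⟩ := Finset.card_eq_one.mp h1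
          have huσ : u ∈ σ :=
            (Finset.mem_inter.mp (huseq ▸ Finset.mem_singleton_self u)).1
          have huC : u ∈ classSet A x₀ w :=
            (Finset.mem_inter.mp (huseq ▸ Finset.mem_singleton_self u)).2
          have hCne : (classSet A x₀ w).Nonempty := ⟨u, huC⟩
          have hmC : mW r A x₀ w ∈ classSet A x₀ w := mW_mem r A x₀ hCne
          have hsd : σ \ classSet A x₀ w = σ.erase u := (erase_eq_sdiff r A x₀ w huseq).symm
          rw [mkQD_congr A x₀ (piB_of_one r A x₀ w h1)]
          by_cases hum : u = mW r A x₀ w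
          · have hins : insert (mW r A x₀ w) (σ \ classSet A x₀ w) = σ := by
              rw [hsd, ← hum, Finset.insert_erase huσ]
            rw [mkQD_congr A x₀ (congrArg (fun s => Finsupp.single s (1 : ℚ)) hins)]
            exact ih σ hσ
          · have hmσ : mW r A x₀ w ∉ σ := by
              intro hc
              have : mW r A x₀ w ∈ σ ∩ classSet A x₀ w := Finset.mem_inter.mpr ⟨hc, hmC⟩
              rw [huseq, Finset.mem_singleton] at this
              exact hum this.symm
            have hσ' : insert (mW r A x₀ w) (σ.erase u) ⊆ A := by
              intro a ha
              rcases Finset.mem_insert.mp ha with h | h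
              · exact h ▸ (classSet_spec A x₀ hmC).1
              · exact hσ (Finset.mem_of_mem_erase h)
            rw [mkQD_congr A x₀ (congrArg (fun s => Finsupp.single s (1 : ℚ))
              (show insert (mW r A x₀ w) (σ \ classSet A x₀ w) =
                insert (mW r A x₀ w) (σ.erase u) by rw [hsd]))]
            have hkey := ih (insert (mW r A x₀ w) (σ.erase u)) hσ'
            have hgen : mkQD A x₀ (Finsupp.single σ (1 : ℚ)) (single_mem_Dsub hσ) -
                mkQD A x₀ (Finsupp.single (insert (mW r A x₀ w) (σ.erase u)) (1 : ℚ))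
                  (single_mem_Dsub hσ') ∈ Vsub A x₀ := by
              rw [← mkQD_sub A x₀ (single_mem_Dsub hσ) (single_mem_Dsub hσ')]
              exact genB_mem_V r A x₀ hσ hx₀σ huσ (classSet_spec A x₀ huC).2.1 hmσ
                (classSet_spec A x₀ hmC).1 (classSet_spec A x₀ hmC).2.1
                (fun hc => hum hc) ((classSet_spec A x₀ huC).2.2.trans
                  (classSet_spec A x₀ hmC).2.2.symm)
            have hsum := Submodule.add_mem _ hgen hkey
            rw [sub_add_sub_cancel] at hsum
            exact hsum
        · have h0 : σ ∩ classSet A x₀ w = ∅ := Finset.card_eq_zero.mp (by omega)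
          rw [mkQD_congr A x₀ (piB_of_zero r A x₀ w h0)]
          exact ih σ hσ
      · have h0 : mkQD A x₀ (Finsupp.single σ (1 : ℚ)) (single_mem_Dsub hσ) = 0 := by
          rw [mkQD_eq_zero r A x₀]
          exact single_mem_Dsub fun a ha => Finset.mem_erase.mpr
            ⟨fun hc => hx₀σ (hc ▸ ha), hσ ha⟩
        rw [h0, map_zero, sub_zero]
        exact Submodule.zero_mem _

lemma sub_PsiL_mem_V (r : LinearOrder (Subsp l)) (A : Finset (Subsp l)) (x₀ : Subsp l)
    (t : List (Subsp l)) (x : DQuot A x₀) : x - PsiL r A x₀ t x ∈ Vsub A x₀ := by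
  induction x using DQuot_induction with
  | h0 => rw [map_zero, sub_zero]; exact Submodule.zero_mem _
  | hs σ hσ => exact basis_sub_mem r A x₀ t σ hσ
  | hsm c y hy =>
      rw [map_smul, ← smul_sub]
      exact Submodule.smul_mem _ _ hy
  | hadd y z hy hz =>
      rw [map_add]
      have : y + z - (PsiL r A x₀ t y + PsiL r A x₀ t z) =
          (y - PsiL r A x₀ t y) + (z - PsiL r A x₀ t z) := by abel
      rw [this]
      exact Submodule.add_mem _ hy hz

/-! #### Exactness -/

lemma PsiL_exact (r : LinearOrder (Subsp l)) (A : Finset (Subsp l)) (x₀ : Subsp l)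
    (hord : GoodOrder r A x₀) :
    ∀ (t : List (Subsp l)) (x : DQuot A x₀), diffQuot r A x₀ x = 0 →
      ∃ g ∈ Vsub A x₀, diffQuot r A x₀ g = x - PsiL r A x₀ t x := by
  intro t
  induction t with
  | nil =>
      intro x hx
      exact ⟨0, Submodule.zero_mem _, by rw [map_zero, PsiL_nil, sub_self]⟩
  | cons w t ih =>
      intro x hx
      have hPix : diffQuot r A x₀ (PiQ r A x₀ w x) = 0 := by
        rw [← PiQ_diffQuot r A x₀ hord, hx, map_zero]
      obtain ⟨g', hg'V, hg'⟩ := ih (PiQ r A x₀ w x) hPix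
      refine ⟨HQ r A x₀ w x + g',
        Submodule.add_mem _ (HQ_mem_V r A x₀ w x) hg'V, ?_⟩
      rw [map_add, hg', PsiL_cons]
      have hh := homotopy_Q r A x₀ hord w x
      rw [hx, map_zero, add_zero] at hh
      have hdh : diffQuot r A x₀ (HQ r A x₀ w x) = x - PiQ r A x₀ w x := by
        rw [eq_sub_iff_add_eq]
        exact hh
      rw [hdh]
      abel

end S6
end
/-- Lemma 3.4. The subspace `V = Σ_{(u,v) ∈ E} I_{u,v}` of
`D(A)/D(A')` satisfies `d(V) ⊆ V`, and `V` is acyclic: every cocycle in `V` is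
the coboundary of an element of `V`. -/
theorem statement6 {l : ℕ} (r : LinearOrder (Subsp l)) (A : Finset (Subsp l))
    (harr : IsArrangement A) (x₀ : Subsp l) (hx₀ : x₀ ∈ A) (hord : GoodOrder r A x₀) :
    Submodule.map (diffQuot r A x₀) (Vsub A x₀) ≤ Vsub A x₀ ∧
    ∀ f ∈ Vsub A x₀, diffQuot r A x₀ f = 0 →
      ∃ g ∈ Vsub A x₀, diffQuot r A x₀ g = f := by
  classical
  have hlst : ∀ y ∈ A.erase x₀,
      x₀ ⊓ y ∈ ((A.erase x₀).image (fun y => x₀ ⊓ y)).toList := by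
    intro y hy
    rw [Finset.mem_toList]
    exact Finset.mem_image_of_mem _ hy
  constructor
  · intro z hz
    obtain ⟨x, hxV, rfl⟩ := hz
    have h1 : S6.PsiL r A x₀ ((A.erase x₀).image (fun y => x₀ ⊓ y)).toList
        (diffQuot r A x₀ x) = 0 := by
      rw [S6.PsiL_diffQuot r A x₀ hord _ x,
        S6.PsiL_kill r A x₀ hx₀ _ hlst x hxV, map_zero]
    have h2 := S6.sub_PsiL_mem_V r A x₀
      ((A.erase x₀).image (fun y => x₀ ⊓ y)).toList (diffQuot r A x₀ x)
    rwa [h1, sub_zero] at h2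
  · intro f hfV hdf
    obtain ⟨g, hgV, hg⟩ := S6.PsiL_exact r A x₀ hord
      ((A.erase x₀).image (fun y => x₀ ⊓ y)).toList f hdf
    refine ⟨g, hgV, ?_⟩
    rw [hg, S6.PsiL_kill r A x₀ hx₀ _ hlst f hfV, sub_zero]
end

section
/- Let A = {x₀, x₁, …, x_n} be a subspace arrangement in ℂ^l such that x₀ is a separator, i.e., x₀ ∩ x₁ ∩ … ∩ x_n ⊊ x₁ ∩ … ∩ x_n. Define k : D(A) → D(A') on basis elements by k(σ) = 0 if x₀ ∈ σ and k(σ) = σ if x₀ ∉ σ. Then k commutes with the differentials (k∘d = d∘k), and k∘j = id where j : D(A') ↪ D(A) is the inclusion. -/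
/-!
Formalization of the Yuzvinsky–Feichtner rational model `D(B)` of the
complement of an arrangement of linear subspaces of `ℂ^l`, together with the
deletion/restriction constructions of the paper.
-/

open scoped Classical

lemma kmap_single {l : ℕ} (x₀ : Subsp l) (σ : Finset (Subsp l)) :
    kmap x₀ (Finsupp.single σ (1 : ℚ)) =
      if x₀ ∈ σ then 0 else Finsupp.single σ (1 : ℚ) := by
  simp only [kmap, Finsupp.lsum_single]
  split <;> simp [*]

lemma inter_le_of_mem {l : ℕ} {σ : Finset (Subsp l)} {x : Subsp l} (hx : x ∈ σ) :
    inter σ ≤ x := Finset.inf_le hx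

/-- from the proof of Proposition 4.4. If `x₀` is a
separator, the map `k : D(A) → D(A')` (identity on basis elements not
containing `x₀`, zero on the others) commutes with the differentials, and
`k ∘ j = id` where `j : D(A') ↪ D(A)` is the inclusion. -/
theorem statement10 {l : ℕ} (r : LinearOrder (Subsp l)) (A : Finset (Subsp l))
    (harr : IsArrangement A) (x₀ : Subsp l) (hx₀ : x₀ ∈ A) (hsep : IsSeparator A x₀) :
    (∀ f ∈ Dsub A, kmap x₀ (diff r f) = diff r (kmap x₀ f)) ∧
    (∀ f ∈ Dsub (A.erase x₀), kmap x₀ f = f) := by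
  -- a separator implies that for x₀ ∈ σ ⊆ A, inter (σ.erase x₀) ≠ inter σ
  have key : ∀ σ : Finset (Subsp l), σ ⊆ A → x₀ ∈ σ → inter (σ.erase x₀) ≠ inter σ := by
    intro σ hσ hx hEq
    have h1 : inter σ ≤ x₀ := inter_le_of_mem hx
    have h2 : inter (A.erase x₀) ≤ inter (σ.erase x₀) :=
      Finset.inf_mono (Finset.erase_subset_erase _ hσ)
    have h3 : inter (A.erase x₀) ≤ x₀ := h2.trans (hEq ▸ h1)
    refine hsep.ne ?_
    refine inf_eq_right.mpr ?_
    convert h3 using 2 <;> congr!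
  constructor
  · intro f hf
    induction hf using Submodule.span_induction with
    | mem f hfmem =>
        obtain ⟨σ, hσ, rfl⟩ := hfmem
        rw [diff_apply_single, kmap_single]
        by_cases hx : x₀ ∈ σ
        · simp only [hx, if_true, map_zero, dBasis, map_sum, map_smul, kmap_single]
          refine Finset.sum_eq_zero fun x hxmem => ?_
          rw [Finset.mem_filter] at hxmem
          have hxne : x ≠ x₀ := by
            rintro rfl
            exact key σ hσ hx hxmem.2
          have : x₀ ∈ σ.erase x := Finset.mem_erase.mpr ⟨Ne.symm hxne, hx⟩
          rw [if_pos this, smul_zero]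
        · simp only [hx, if_false, diff_apply_single, dBasis, map_sum, map_smul, kmap_single]
          refine Finset.sum_congr rfl fun x hxmem => ?_
          have : x₀ ∉ σ.erase x := fun h => hx (Finset.mem_of_mem_erase h)
          rw [if_neg this]
    | zero => simp
    | add f g _ _ hf hg => simp only [map_add, hf, hg]
    | smul c f _ hf => simp only [map_smul, hf]
  · intro f hf
    induction hf using Submodule.span_induction with
    | mem f hfmem =>
        obtain ⟨σ, hσ, rfl⟩ := hfmem
        have hx : x₀ ∉ σ := fun h => Finset.notMem_erase x₀ A (hσ h)
        rw [kmap_single, if_neg hx]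
    | zero => simp
    | add f g _ _ hf hg => simp only [map_add, hf, hg]
    | smul c f _ hf => simp only [map_smul, hf]
end
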